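/- arXiv:1610.00812 — 4 statements merged into one kernel-verified Lean document; each statement's English description precedes it below -/
import Mathlib

section
/- Let c be any Coxeter element of the Weyl group of type Cₙ acting on ℝⁿ, and for 1 ≤ i ≤ n let ω_i = e_1 + ⋯ + e_i denote the i-th fundamental weight. Then for each 1 ≤ i ≤ n, the least positive integer m such that cᵐ(ω_i) = −ω_i is m = n. -/
/-!
Type `Cₙ` Weyl group in its reflection representation on `ℝⁿ`:
for `1 ≤ i ≤ n-1` the simple reflection `s_i` swaps the coordinates `i` and `i+1`
(1-indexed), and `s_n` negates the last coordinate.  A Coxeter element is a composition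
`s_{τ(1)} ∘ ⋯ ∘ s_{τ(n)}` for a permutation `τ` of `{1, …, n}`.  The fundamental weights
are `ω_i = e_1 + ⋯ + e_i`.

STATEMENT: for each `1 ≤ i ≤ n`, the least positive integer `m` with `cᵐ(ω_i) = -ω_i`
is `m = n`.
-/

noncomputable section

/-- Negation of the `i`-th coordinate of `ℝⁿ`, as a linear map. -/
def negLin (n : ℕ) (i : Fin n) : (Fin n → ℝ) →ₗ[ℝ] (Fin n → ℝ) :=
  LinearMap.pi fun j => if j = i then -(LinearMap.proj j) else LinearMap.proj j

lemma negLin_comp (n : ℕ) (i : Fin n) : (negLin n i).comp (negLin n i) = LinearMap.id := by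
  ext v j
  by_cases h : j = i <;> simp [negLin, LinearMap.pi_apply, h]

/-- The simple reflection `s_i` (`1 ≤ i ≤ n`, 1-indexed) of the Weyl group of type `Cₙ`
acting on `ℝⁿ`: for `1 ≤ i ≤ n-1` it swaps the coordinates `i` and `i+1` (i.e. the 0-indexed
coordinates `i-1` and `i`), and `s_n` negates the last coordinate.  For `i` out of range it
is the identity. -/
def sC (n : ℕ) (i : ℕ) : (Fin n → ℝ) ≃ₗ[ℝ] (Fin n → ℝ) :=
  if h : 1 ≤ i ∧ i < n then
    LinearEquiv.funCongrLeft ℝ ℝ (Equiv.swap ⟨i - 1, by omega⟩ ⟨i, h.2⟩)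
  else if h2 : i = n ∧ 0 < n then
    LinearEquiv.ofLinear (negLin n ⟨n - 1, by omega⟩) (negLin n ⟨n - 1, by omega⟩)
      (negLin_comp n _) (negLin_comp n _)
  else LinearEquiv.refl ℝ _

/-- The fundamental weight `ω_{i+1} = e_1 + ⋯ + e_{i+1}` (for `i : Fin n`, 0-indexed):
its 0-indexed coordinates `0, …, i` equal `1` and the rest equal `0`. -/
def omegaC (n : ℕ) (i : Fin n) : Fin n → ℝ := fun j => if j ≤ i then 1 else 0

section CoxAux
open Equiv Equiv.Perm

variable {n : ℕ}


open Equiv Equiv.Perm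

variable {n : ℕ}



/-- Sign of a boolean: `true ↦ -1`, `false ↦ 1`. -/
def sgnb (b : Bool) : ℝ := cond b (-1) 1

lemma sgnb_mul_self (b : Bool) : sgnb b * sgnb b = 1 := by cases b <;> norm_num [sgnb]

lemma sgnb_xor (a b : Bool) : sgnb (xor a b) = sgnb a * sgnb b := by
  cases a <;> cases b <;> norm_num [sgnb]

/-- Signed permutation as a linear map. -/
def toLinMap (σ : Perm (Fin n)) (η : Fin n → Bool) : (Fin n → ℝ) →ₗ[ℝ] (Fin n → ℝ) where
  toFun v := fun k => sgnb (η k) * v (σ⁻¹ k)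
  map_add' v w := by funext k; simp [mul_add]
  map_smul' r v := by funext k; simp [smul_eq_mul]; ring

lemma toLinMap_apply (σ : Perm (Fin n)) (η : Fin n → Bool) (v : Fin n → ℝ) (k : Fin n) :
    toLinMap σ η v k = sgnb (η k) * v (σ⁻¹ k) := rfl

/-- Signed permutation as a linear equivalence. -/
def toLinE (σ : Perm (Fin n)) (η : Fin n → Bool) : (Fin n → ℝ) ≃ₗ[ℝ] (Fin n → ℝ) :=
  LinearEquiv.ofLinear (toLinMap σ η) (toLinMap σ⁻¹ (fun k => η (σ k)))
    (by
      ext v k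
      simp only [LinearMap.comp_apply, toLinMap_apply, LinearMap.id_apply, inv_inv]
      rw [Perm.inv_def, Equiv.apply_symm_apply, ← mul_assoc, sgnb_mul_self, one_mul])
    (by
      ext v k
      simp only [LinearMap.comp_apply, toLinMap_apply, LinearMap.id_apply, inv_inv]
      rw [Perm.inv_def, Equiv.symm_apply_apply, ← mul_assoc, sgnb_mul_self, one_mul])

lemma toLinE_apply (σ : Perm (Fin n)) (η : Fin n → Bool) (v : Fin n → ℝ) (k : Fin n) :
    toLinE σ η v k = sgnb (η k) * v (σ⁻¹ k) := rfl

lemma toLinE_mul (σ σ' : Perm (Fin n)) (η η' : Fin n → Bool) :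
    toLinE σ η * toLinE σ' η' = toLinE (σ * σ') (fun k => xor (η k) (η' (σ⁻¹ k))) := by
  apply LinearEquiv.ext
  intro v
  funext k
  show (toLinE σ η) ((toLinE σ' η') v) k = _
  simp only [toLinE_apply, sgnb_xor, mul_inv_rev, Perm.mul_apply]
  ring

lemma toLinE_one : toLinE (1 : Perm (Fin n)) (fun _ => false) = 1 := by
  apply LinearEquiv.ext
  intro v
  funext k
  simp [toLinE_apply, sgnb]

/-- Unsigned permutations, as a monoid hom into linear equivalences. -/
def pureHom (n : ℕ) : Perm (Fin n) →* ((Fin n → ℝ) ≃ₗ[ℝ] (Fin n → ℝ)) where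
  toFun σ := toLinE σ (fun _ => false)
  map_one' := toLinE_one
  map_mul' σ σ' := by rw [toLinE_mul]; simp

/-- The adjacent transposition `(e, e+1)` (identity if out of range). -/
def sw (n : ℕ) (e : ℕ) : Perm (Fin n) := if h : e + 1 < n then Equiv.swap ⟨e, by omega⟩ ⟨e+1, h⟩ else 1




/-- Either `A,B` are on the same cycle of `f`, or on the same cycle of `swap A B * f`. -/
lemma sameCycle_disj (f : Perm (Fin n)) (A B : Fin n) :
    f.SameCycle A B ∨ (Equiv.swap A B * f).SameCycle A B := by
  set g := Equiv.swap A B * f with hg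
  have hex : ∃ t, 0 < t ∧ ((g ^ t) B = A ∨ (g ^ t) B = B) :=
    ⟨orderOf g, orderOf_pos g, Or.inr (by rw [pow_orderOf_eq_one]; rfl)⟩
  set t0 := Nat.find hex with ht0
  obtain ⟨ht0pos, hor⟩ := Nat.find_spec hex
  have claim : ∀ t, t < t0 → (g ^ t) B = (f ^ t) B := by
    intro t
    induction t with
    | zero => simp
    | succ t ih =>
      intro h
      have ht : t < t0 := by omega
      have h1 : (g ^ (t + 1)) B = Equiv.swap A B ((f ^ (t + 1)) B) := by
        rw [pow_succ', Perm.mul_apply, ih ht, hg, Perm.mul_apply, ← Perm.mul_apply f,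
          ← pow_succ']
      by_cases hA : (f ^ (t + 1)) B = A
      · exfalso
        have := Nat.find_min hex h
        push_neg at this
        have h2 : (g ^ (t + 1)) B = B := by rw [h1, hA, Equiv.swap_apply_left]
        rcases this (by omega) with h3
        simp [h2] at h3
      · by_cases hB : (f ^ (t + 1)) B = B
        · exfalso
          have := Nat.find_min hex h
          push_neg at this
          have h2 : (g ^ (t + 1)) B = A := by rw [h1, hB, Equiv.swap_apply_right]
          rcases this (by omega) with h3
          simp [h2] at h3
        · rw [h1, Equiv.swap_apply_of_ne_of_ne hA hB]
  have key : (g ^ t0) B = Equiv.swap A B ((f ^ t0) B) := by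
    have h1 : t0 = (t0 - 1) + 1 := by omega
    rw [h1, pow_succ', Perm.mul_apply, claim (t0 - 1) (by omega), hg, Perm.mul_apply,
      ← Perm.mul_apply f, ← pow_succ']
  rcases hor with h | h
  · exact Or.inr (Perm.SameCycle.symm ⟨(t0 : ℤ), by rw [zpow_natCast]; exact h⟩)
  · left
    have hf : (f ^ t0) B = A := by
      have := key
      rw [h] at this
      have h2 := congrArg (Equiv.swap A B) this
      rwa [Equiv.swap_apply_self, Equiv.swap_apply_right, eq_comm] at h2
    exact Perm.SameCycle.symm ⟨(t0 : ℤ), by rw [zpow_natCast]; exact hf⟩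

lemma lift_sameCycle (f : Perm (Fin n)) (A B : Fin n)
    (hgAB : (Equiv.swap A B * f).SameCycle A B) :
    ∀ j k : Fin n, f.SameCycle j k → (Equiv.swap A B * f).SameCycle j k := by
  set g := Equiv.swap A B * f with hg
  have step : ∀ j : Fin n, g.SameCycle j (f j) := by
    intro j
    have hj : g.SameCycle j (g j) := ⟨1, by simp⟩
    have hgj : g j = Equiv.swap A B (f j) := rfl
    by_cases hA : f j = A
    · rw [hA]
      have : g j = B := by rw [hgj, hA, Equiv.swap_apply_left]
      rw [this] at hj
      exact hj.trans hgAB.symm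
    · by_cases hB : f j = B
      · rw [hB]
        have : g j = A := by rw [hgj, hB, Equiv.swap_apply_right]
        rw [this] at hj
        exact hj.trans hgAB
      · have : g j = f j := by rw [hgj, Equiv.swap_apply_of_ne_of_ne hA hB]
        rwa [this] at hj
  intro j k h
  obtain ⟨t, -, rfl⟩ := h.exists_pow_eq'
  clear h
  induction t with
  | zero => exact ⟨0, by simp⟩
  | succ t ih =>
    have : (f ^ (t + 1)) j = f ((f ^ t) j) := by rw [pow_succ', Perm.mul_apply]
    rw [this]
    exact ih.trans (step _)


/-- `x` and `y` are connected by the path edges listed in `xs`. -/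
def conn (xs : List ℕ) (x y : Fin n) : Prop :=
  ∀ e : ℕ, min x.val y.val ≤ e → e < max x.val y.val → e ∈ xs

lemma conn_rfl (xs : List ℕ) (x : Fin n) : conn xs x x := by
  intro e h1 h2; omega

lemma conn_symm {xs : List ℕ} {x y : Fin n} (h : conn xs x y) : conn xs y x := by
  intro e h1 h2; exact h e (by omega) (by omega)

lemma conn_step (xs : List ℕ) (b : ℕ) (hb : b ∈ xs) (x : Fin n) :
    ∀ w : Fin n, conn xs x w → conn xs x (sw n b w) := by
  intro w hw
  by_cases hbn : b + 1 < n
  · rw [sw, dif_pos hbn]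
    set Bb : Fin n := ⟨b, by omega⟩
    set Cb : Fin n := ⟨b + 1, hbn⟩
    by_cases h1 : w = Bb
    · rw [h1, Equiv.swap_apply_left]
      intro e he1 he2
      by_cases heb : e = b
      · exact heb ▸ hb
      · refine hw e ?_ ?_ <;> (rw [h1] at *; simp only [Bb, Cb] at *; omega)
    · by_cases h2 : w = Cb
      · rw [h2, Equiv.swap_apply_right]
        intro e he1 he2
        by_cases heb : e = b
        · exact heb ▸ hb
        · refine hw e ?_ ?_ <;> (rw [h2] at *; simp only [Bb, Cb] at *; omega)
      · rw [Equiv.swap_apply_of_ne_of_ne h1 h2]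
        exact hw
  · rw [sw, dif_neg hbn]
    exact hw

lemma conn_prod (xs : List ℕ) (x : Fin n) :
    ∀ ys : List ℕ, (∀ e ∈ ys, e ∈ xs) →
      ∀ w : Fin n, conn xs x w → conn xs x (((ys.map (sw n)).prod) w) := by
  intro ys
  induction ys with
  | nil => intro _ w hw; simpa using hw
  | cons b ys ih =>
    intro hsub w hw
    have h1 : ((b :: ys).map (sw n)).prod = sw n b * (ys.map (sw n)).prod := by
      simp [List.prod_cons]
    rw [h1, Perm.mul_apply]
    exact conn_step xs b (hsub b (by simp)) x _ (ih (fun e he => hsub e (by simp [he])) w hw)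

lemma conn_pow (xs : List ℕ) (x : Fin n) :
    ∀ t : ℕ, conn xs x (((xs.map (sw n)).prod ^ t) x) := by
  intro t
  induction t with
  | zero => simpa using conn_rfl xs x
  | succ t ih =>
    have : ((xs.map (sw n)).prod ^ (t + 1)) x
        = (xs.map (sw n)).prod (((xs.map (sw n)).prod ^ t) x) := by
      rw [pow_succ', Perm.mul_apply]
    rw [this]
    exact conn_prod xs x xs (fun e he => he) _ ih

/-- Orbits of the product of the listed edge transpositions refine connectivity. -/
lemma refine_conn (xs : List ℕ) (x y : Fin n)
    (h : ((xs.map (sw n)).prod).SameCycle x y) : conn xs x y := by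
  obtain ⟨t, -, rfl⟩ := h.exists_pow_eq'
  exact conn_pow xs x t

/-- Connectivity implies being on the same cycle, for a nodup list of edges. -/
lemma forward_conn : ∀ xs : List ℕ, xs.Nodup →
    ∀ x y : Fin n, conn xs x y → ((xs.map (sw n)).prod).SameCycle x y := by
  intro xs
  induction xs with
  | nil =>
    intro _ x y hc
    have hxy : x = y := by
      by_contra hne
      have hne' : x.val ≠ y.val := fun h => hne (Fin.ext h)
      exact absurd (hc (min x.val y.val) le_rfl (by omega)) (by simp)
    rw [hxy]
  | cons a xs ih =>
    intro hnd x y hc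
    obtain ⟨ha, hnd'⟩ := List.nodup_cons.mp hnd
    have hprod : (((a :: xs).map (sw n)).prod) = sw n a * (xs.map (sw n)).prod := by
      simp [List.prod_cons]
    by_cases han : a + 1 < n
    · -- the new edge is genuine
      set A : Fin n := ⟨a, by omega⟩
      set B : Fin n := ⟨a + 1, han⟩
      set f := (xs.map (sw n)).prod with hf
      have hswa : sw n a = Equiv.swap A B := by rw [sw, dif_pos han]
      have hnsc : ¬ f.SameCycle A B := by
        intro hsc
        have := refine_conn xs A B hsc a (by simp [A, B]) (by simp [A, B])
        exact ha this
      have hgAB : (Equiv.swap A B * f).SameCycle A B := by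
        rcases sameCycle_disj f A B with h | h
        · exact absurd h hnsc
        · exact h
      have hlift := lift_sameCycle f A B hgAB
      rw [hprod, hswa]
      -- case analysis on whether a lies between x and y
      by_cases hmid : min x.val y.val ≤ a ∧ a < max x.val y.val
      · -- connect x ~ A(resp B) ~ B(resp A) ~ y
        have hxA : conn xs x A ∨ conn xs x B := by
          by_cases hxy : x.val ≤ a
          · left
            intro e h1 h2
            have := hc e (by simp [A] at h1 h2 ⊢; omega) (by simp [A] at h1 h2 ⊢; omega)
            rcases List.mem_cons.mp this with h | h
            · exfalso; simp [A] at h2; omega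
            · exact h
          · right
            intro e h1 h2
            have := hc e (by simp [B] at h1 h2 ⊢; omega) (by simp [B] at h1 h2 ⊢; omega)
            rcases List.mem_cons.mp this with h | h
            · exfalso; simp [B] at h1; omega
            · exact h
        have hyA : conn xs y A ∨ conn xs y B := by
          by_cases hxy : y.val ≤ a
          · left
            intro e h1 h2
            have := hc e (by simp [A] at h1 h2 ⊢; omega) (by simp [A] at h1 h2 ⊢; omega)
            rcases List.mem_cons.mp this with h | h
            · exfalso; simp [A] at h2; omega
            · exact h
          · right
            intro e h1 h2
            have := hc e (by simp [B] at h1 h2 ⊢; omega) (by simp [B] at h1 h2 ⊢; omega)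
            rcases List.mem_cons.mp this with h | h
            · exfalso; simp [B] at h1; omega
            · exact h
        have hAB' : (Equiv.swap A B * f).SameCycle B A := hgAB.symm
        rcases hxA with hx | hx <;> rcases hyA with hy | hy
        · exact (hlift x A (ih hnd' x A hx)).trans (hlift A y (ih hnd' A y (conn_symm hy)))
        · exact ((hlift x A (ih hnd' x A hx)).trans hgAB).trans
            (hlift B y (ih hnd' B y (conn_symm hy)))
        · exact ((hlift x B (ih hnd' x B hx)).trans hAB').trans
            (hlift A y (ih hnd' A y (conn_symm hy)))
        · exact (hlift x B (ih hnd' x B hx)).trans (hlift B y (ih hnd' B y (conn_symm hy)))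
      · -- a is outside the interval, so x,y already connected in xs
        have hc' : conn xs x y := by
          intro e h1 h2
          rcases List.mem_cons.mp (hc e h1 h2) with h | h
          · exfalso; apply hmid; omega
          · exact h
        exact hlift x y (ih hnd' x y hc')
    · -- trivial edge
      have : sw n a = 1 := by rw [sw, dif_neg han]
      rw [hprod, this, one_mul]
      apply ih hnd' x y
      intro e h1 h2
      rcases List.mem_cons.mp (hc e h1 h2) with h | h
      · exfalso
        have : max x.val y.val ≤ n := by omega
        omega
      · exact h

/-- If every edge occurs in the nodup list `xs`, the product is transitive. -/
lemma trans_all (xs : List ℕ) (hnd : xs.Nodup) (hall : ∀ e, e + 1 < n → e ∈ xs)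
    (x y : Fin n) : ((xs.map (sw n)).prod).SameCycle x y := by
  apply forward_conn xs hnd
  intro e h1 h2
  apply hall
  have : max x.val y.val ≤ n - 1 := by omega
  omega

open Finset in
lemma toLinE_pow_apply (σ : Equiv.Perm (Fin n)) (η : Fin n → Bool) (m : ℕ) (v : Fin n → ℝ)
    (k : Fin n) :
    ((toLinE σ η) ^ m) v k
      = (∏ t ∈ Finset.range m, sgnb (η ((σ ^ t)⁻¹ k))) * v ((σ ^ m)⁻¹ k) := by
  induction m generalizing v k with
  | zero => simp [sgnb]
  | succ m ih =>
    have h1 : ((toLinE σ η) ^ (m + 1)) v k = ((toLinE σ η) ^ m) ((toLinE σ η) v) k := by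
      rw [pow_succ]; rfl
    rw [h1, ih, toLinE_apply, Finset.prod_range_succ]
    have h2 : σ⁻¹ ((σ ^ m)⁻¹ k) = (σ ^ (m + 1))⁻¹ k := by
      rw [pow_succ, mul_inv_rev, Equiv.Perm.mul_apply]
    rw [h2]
    ring

/-- For a point `k0` whose `σ`-orbit is everything, powers `σ^a k0`, `a < n`,
enumerate `Fin n` bijectively, and `σ^n k0 = k0`. -/
lemma orbit_facts (σ : Equiv.Perm (Fin n)) (k0 : Fin n) (hn : 0 < n)
    (htrans : ∀ y, σ.SameCycle k0 y) :
    ((σ ^ n) k0 = k0) ∧ (∀ a b, a < n → b < n → (σ ^ a) k0 = (σ ^ b) k0 → a = b)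
      ∧ (∀ y, ∃ a, a < n ∧ (σ ^ a) k0 = y) := by
  have hex : ∃ t, 0 < t ∧ (σ ^ t) k0 = k0 :=
    ⟨orderOf σ, orderOf_pos σ, by rw [pow_orderOf_eq_one]; rfl⟩
  obtain ⟨d, ⟨hdpos, hdfix⟩, hdmin⟩ :
      ∃ d, (0 < d ∧ (σ ^ d) k0 = k0) ∧ ∀ t, t < d → ¬(0 < t ∧ (σ ^ t) k0 = k0) :=
    ⟨Nat.find hex, Nat.find_spec hex, fun t ht => Nat.find_min hex ht⟩
  have hperiod : ∀ q r : ℕ, (σ ^ (r + d * q)) k0 = (σ ^ r) k0 := by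
    intro q
    induction q with
    | zero => simp
    | succ q ih =>
      intro r
      have he : r + d * (q + 1) = (r + d * q) + d := by ring
      rw [he, pow_add, Equiv.Perm.mul_apply, hdfix, ih r]
  have hinj : ∀ a b, a < d → b < d → (σ ^ a) k0 = (σ ^ b) k0 → a = b := by
    have key : ∀ a b, a ≤ b → b < d → (σ ^ a) k0 = (σ ^ b) k0 → a = b := by
      intro a b hab hbd h
      by_contra hne
      have h1 : b = a + (b - a) := by omega
      rw [h1, pow_add, Equiv.Perm.mul_apply] at h
      have h2 : (σ ^ (b - a)) k0 = k0 := (σ ^ a).injective h.symm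
      exact hdmin (b - a) (by omega) ⟨by omega, h2⟩
    intro a b ha hb h
    rcases le_total a b with hab | hab
    · exact key a b hab hb h
    · exact (key b a hab ha h.symm).symm
  have hsurj : ∀ y, ∃ a, a < d ∧ (σ ^ a) k0 = y := by
    intro y
    obtain ⟨t, -, ht⟩ := (htrans y).exists_pow_eq'
    refine ⟨t % d, Nat.mod_lt _ hdpos, ?_⟩
    have h1 := hperiod (t / d) (t % d)
    rw [Nat.mod_add_div] at h1
    rw [← h1]
    exact ht
  have hdn : d = n := by
    have hle : d ≤ n := by
      have : Function.Injective (fun a : Fin d => (σ ^ (a : ℕ)) k0) := by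
        intro a b hab
        exact Fin.ext (hinj a b a.isLt b.isLt hab)
      simpa using Fintype.card_le_of_injective _ this
    have hge : n ≤ d := by
      have : Function.Surjective (fun a : Fin d => (σ ^ (a : ℕ)) k0) := by
        intro y
        obtain ⟨a, ha, h⟩ := hsurj y
        exact ⟨⟨a, ha⟩, h⟩
      simpa using Fintype.card_le_of_surjective _ this
    omega
  subst hdn
  exact ⟨hdfix, hinj, hsurj⟩

lemma funCongrLeft_swap (P Q : Fin n) :
    LinearEquiv.funCongrLeft ℝ ℝ (Equiv.swap P Q)
      = toLinE (Equiv.swap P Q) (fun _ => false) := by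
  apply LinearEquiv.ext
  intro v
  funext k
  show v (Equiv.swap P Q k) = sgnb false * v ((Equiv.swap P Q)⁻¹ k)
  rw [Equiv.swap_inv]
  simp [sgnb]

lemma sC_eq_swap {n : ℕ} (v : ℕ) (hv : v + 1 < n) :
    sC n (v + 1) = toLinE (sw n v) (fun _ => false) := by
  have h1 : 1 ≤ v + 1 ∧ v + 1 < n := ⟨by omega, hv⟩
  have h2 : (⟨v + 1 - 1, by omega⟩ : Fin n) = ⟨v, by omega⟩ := by
    apply Fin.ext; simp
  simp only [sC]
  rw [dif_pos h1, h2, sw, dif_pos hv]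
  exact funCongrLeft_swap _ _

lemma sC_eq_neg {n : ℕ} (hn : 0 < n) :
    sC n n = toLinE (1 : Equiv.Perm (Fin n)) (fun j => decide (j = ⟨n - 1, by omega⟩)) := by
  have h1 : ¬(1 ≤ n ∧ n < n) := by omega
  simp only [sC]
  rw [dif_neg h1, dif_pos ⟨by trivial, hn⟩]
  apply LinearEquiv.ext
  intro v
  funext j
  show negLin n ⟨n - 1, by omega⟩ v j = _
  rw [toLinE_apply]
  simp only [negLin, LinearMap.pi_apply]
  by_cases hj : j = (⟨n - 1, by omega⟩ : Fin n) <;> simp [hj, sgnb]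


end CoxAux

/-- Let `c = s_{τ(1)} ∘ ⋯ ∘ s_{τ(n)}` be any Coxeter element of the Weyl group of type `Cₙ`
(`n ≥ 3`) acting on `ℝⁿ`.  Then for each fundamental weight `ω_i` (`1 ≤ i ≤ n`), the least
positive integer `m` such that `cᵐ(ω_i) = -ω_i` is `m = n`. -/
theorem coxeter_element_least_pow_fundamental_weight (n : ℕ) (hn : 3 ≤ n)
    (τ : Equiv.Perm (Fin n)) (i : Fin n) :
    IsLeast {m : ℕ | 0 < m ∧
      (((List.ofFn fun k : Fin n => sC n ((τ k : ℕ) + 1)).prod) ^ m) (omegaC n i)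
        = -omegaC n i} n := by
  classical
  have npos : 0 < n := by omega
  set nl : Fin n := ⟨n - 1, by omega⟩ with hnl
  set p : Fin n := τ.symm nl with hp
  set xs : List ℕ := List.ofFn (fun k => (τ k).val) with hxs
  set σ : Equiv.Perm (Fin n) := (xs.map (sw n)).prod with hσ
  set l : List ((Fin n → ℝ) ≃ₗ[ℝ] (Fin n → ℝ)) :=
    List.ofFn fun k : Fin n => sC n ((τ k : ℕ) + 1) with hl
  have hτp : τ p = nl := τ.apply_symm_apply nl
  have hgen : ∀ k : Fin n, k ≠ p → (τ k).val + 1 < n := by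
    intro k hk
    have h1 : τ k ≠ nl := fun h => hk (by rw [hp, ← h, τ.symm_apply_apply])
    have h2 : (τ k).val < n := (τ k).isLt
    have h3 : (τ k).val ≠ n - 1 := fun h => h1 (Fin.ext h)
    omega
  have hlen : l.length = n := by simp [hl]
  have hpv : p.val < l.length := by rw [hlen]; exact p.isLt
  have hsplit : l.prod = (l.take p.val).prod * (l[p.val] * (l.drop (p.val + 1)).prod) := by
    conv_lhs => rw [← List.take_append_drop p.val l, List.drop_eq_getElem_cons hpv]
    rw [List.prod_append, List.prod_cons]
  set u : Equiv.Perm (Fin n) := ((xs.map (sw n)).take p.val).prod with hu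
  set w : Equiv.Perm (Fin n) := ((xs.map (sw n)).drop (p.val + 1)).prod with hw
  set k0 : Fin n := u nl with hk0
  have hmaplen : (xs.map (sw n)).length = n := by simp [hxs]
  have htake : l.take p.val
      = ((xs.map (sw n)).take p.val).map (fun π => toLinE π (fun _ => false)) := by
    apply List.ext_getElem
    · simp [hl, hxs]
    · intro j h1 h2
      have hj : j < p.val := by simp [hl] at h1; omega
      have hjn : j < n := by omega
      simp only [List.getElem_take, List.getElem_map, hl, hxs, List.getElem_ofFn]
      have hne : (⟨j, hjn⟩ : Fin n) ≠ p := by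
        intro h
        have := congrArg Fin.val h
        simp at this
        omega
      rw [sC_eq_swap _ (hgen _ hne)]
  have hdrop : l.drop (p.val + 1)
      = ((xs.map (sw n)).drop (p.val + 1)).map (fun π => toLinE π (fun _ => false)) := by
    apply List.ext_getElem
    · simp [hl, hxs]
    · intro j h1 h2
      have hj : p.val + 1 + j < n := by simp [hl] at h1; omega
      simp only [List.getElem_drop, List.getElem_map, hl, hxs, List.getElem_ofFn]
      have hne : (⟨p.val + 1 + j, hj⟩ : Fin n) ≠ p := by
        intro h
        have := congrArg Fin.val h
        simp at this
        omega
      rw [sC_eq_swap _ (hgen _ hne)]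
  have hgetp : l[p.val] = toLinE 1 (fun j => decide (j = nl)) := by
    have h1 : l[p.val]'hpv = sC n ((τ ⟨p.val, p.isLt⟩ : ℕ) + 1) := by
      simp only [hl, List.getElem_ofFn]
    rw [h1, show (⟨p.val, p.isLt⟩ : Fin n) = p from rfl, hτp,
      show (nl : ℕ) + 1 = n by rw [hnl]; simp; omega]
    rw [sC_eq_neg npos]
  have hσuw : σ = u * w := by
    rw [hσ]
    conv_lhs => rw [← List.take_append_drop p.val (xs.map (sw n)),
      List.drop_eq_getElem_cons (by rw [hmaplen]; exact p.isLt)]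
    rw [List.prod_append, List.prod_cons]
    have hmid : (xs.map (sw n))[p.val]'(by rw [hmaplen]; exact p.isLt) = 1 := by
      simp only [hxs, List.getElem_map, List.getElem_ofFn]
      rw [show (⟨p.val, p.isLt⟩ : Fin n) = p from rfl, hτp]
      rw [sw, dif_neg (by rw [hnl]; simp; omega)]
    rw [hmid, one_mul]
  have hprodtake : (l.take p.val).prod = toLinE u (fun _ => false) := by
    rw [htake, show (fun π : Equiv.Perm (Fin n) => toLinE π (fun _ => false))
      = ⇑(pureHom n) from rfl]
    exact (map_list_prod (pureHom n) _).symm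
  have hproddrop : (l.drop (p.val + 1)).prod = toLinE w (fun _ => false) := by
    rw [hdrop, show (fun π : Equiv.Perm (Fin n) => toLinE π (fun _ => false))
      = ⇑(pureHom n) from rfl]
    exact (map_list_prod (pureHom n) _).symm
  have hc : l.prod = toLinE σ (fun k => decide (k = k0)) := by
    rw [hsplit, hprodtake, hgetp, hproddrop, toLinE_mul, toLinE_mul, hσuw, one_mul]
    congr 1
    funext k
    simp only [Bool.xor_false, Bool.false_xor]
    rw [hk0]
    simp [Equiv.Perm.inv_eq_iff_eq, Equiv.symm_apply_eq]
  -- transitivity of σ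
  have hnd : xs.Nodup := by
    rw [hxs]
    exact List.nodup_ofFn.mpr (fun a b h => τ.injective (Fin.ext h))
  have hall : ∀ e, e + 1 < n → e ∈ xs := by
    intro e he
    rw [hxs, List.mem_ofFn]
    exact ⟨τ.symm ⟨e, by omega⟩, by simp⟩
  have htrans : ∀ y, σ.SameCycle k0 y := fun y => trans_all xs hnd hall k0 y
  obtain ⟨hfix, hinj, hsurj⟩ := orbit_facts σ k0 npos htrans
  clear_value k0
  clear_value u w σ l xs p nl
  set η1 : Fin n → Bool := fun k => decide (k = k0) with hη1
  -- sign product evaluation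
  have hsign : ∀ m a : ℕ, m ≤ n → a < n →
      (∏ t ∈ Finset.range m, sgnb (η1 ((σ ^ t)⁻¹ ((σ ^ a) k0)))) = if a < m then -1 else 1 := by
    intro m a hm ha
    have h1 : ∀ t ∈ Finset.range m,
        sgnb (η1 ((σ ^ t)⁻¹ ((σ ^ a) k0))) = if t = a then (-1 : ℝ) else 1 := by
      intro t ht
      rw [Finset.mem_range] at ht
      have h2 : ((σ ^ t)⁻¹ ((σ ^ a) k0) = k0) ↔ t = a := by
        rw [Equiv.Perm.inv_eq_iff_eq]
        constructor
        · intro h; exact (hinj a t ha (by omega) h).symm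
        · rintro rfl; rfl
      by_cases h3 : t = a
      · rw [if_pos h3]
        have h4 : (σ ^ t)⁻¹ ((σ ^ a) k0) = k0 := h2.mpr h3
        rw [hη1]
        simp [h4, sgnb]
      · rw [if_neg h3]
        have h4 : (σ ^ t)⁻¹ ((σ ^ a) k0) ≠ k0 := fun hh => h3 (h2.mp hh)
        rw [hη1]
        simp only [h4, sgnb, decide_false, cond_false]
    rw [Finset.prod_congr rfl h1, Finset.prod_ite_eq']
    simp [Finset.mem_range]
  have hinvge : ∀ m a : ℕ, m ≤ a → (σ ^ m)⁻¹ ((σ ^ a) k0) = (σ ^ (a - m)) k0 := by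
    intro m a hma
    rw [Equiv.Perm.inv_eq_iff_eq, ← Equiv.Perm.mul_apply, ← pow_add]
    rw [show m + (a - m) = a by omega]
  have hinvlt : ∀ m a : ℕ, a < m → m ≤ n → (σ ^ m)⁻¹ ((σ ^ a) k0) = (σ ^ (a + n - m)) k0 := by
    intro m a ham hmn
    rw [Equiv.Perm.inv_eq_iff_eq, ← Equiv.Perm.mul_apply, ← pow_add]
    rw [show m + (a + n - m) = a + n by omega, pow_add, Equiv.Perm.mul_apply, hfix]
  constructor
  · refine ⟨npos, ?_⟩
    rw [hc]
    funext k
    obtain ⟨a, ha, hak⟩ := hsurj k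
    rw [← hak, toLinE_pow_apply, hsign n a le_rfl ha, hinvlt n a ha le_rfl,
      show a + n - n = a by omega, if_pos ha, Pi.neg_apply]
    ring
  · intro m hm
    obtain ⟨hmpos, heq⟩ := hm
    by_contra hcon
    push_neg at hcon
    rw [hc] at heq
    set A : Finset ℕ := (Finset.range n).filter (fun a => omegaC n i ((σ ^ a) k0) = 1) with hA
    have hmemA : ∀ a, a ∈ A ↔ a < n ∧ omegaC n i ((σ ^ a) k0) = 1 := by
      intro a; simp [hA, Finset.mem_filter, Finset.mem_range]
    have hANe : A.Nonempty := by
      obtain ⟨a0, ha0, hk⟩ := hsurj ⟨0, npos⟩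
      refine ⟨a0, (hmemA a0).mpr ⟨ha0, ?_⟩⟩
      rw [hk]
      show (if (⟨0, npos⟩ : Fin n) ≤ i then (1 : ℝ) else 0) = 1
      rw [if_pos (by simp [Fin.le_def])]
    have heval : ∀ a, a < n →
        (if a < m then (-1 : ℝ) else 1) * omegaC n i ((σ ^ m)⁻¹ ((σ ^ a) k0))
          = -(omegaC n i ((σ ^ a) k0)) := by
      intro a ha
      have h1 := congrFun heq ((σ ^ a) k0)
      rw [toLinE_pow_apply, hsign m a (by omega) ha, Pi.neg_apply] at h1
      exact h1
    have hstep1 : ∀ a, a ∈ A → a < m := by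
      intro a haA
      obtain ⟨ha, hval⟩ := (hmemA a).mp haA
      by_contra hge
      push_neg at hge
      have h1 := heval a ha
      rw [if_neg (by omega), hinvge m a hge, one_mul, hval] at h1
      revert h1
      simp only [omegaC]
      split_ifs <;> norm_num
    have hstep2 : ∀ a, a ∈ A → a + n - m ∈ A := by
      intro a haA
      obtain ⟨ha, hval⟩ := (hmemA a).mp haA
      have ham := hstep1 a haA
      have h1 := heval a ha
      rw [if_pos ham, hinvlt m a ham (by omega), hval] at h1
      refine (hmemA _).mpr ⟨by omega, by linarith⟩
    have hmax := A.max'_mem hANe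
    have h2 := hstep2 _ hmax
    have h3 := A.le_max' _ h2
    have h4 := hstep1 _ hmax
    omega

end
end

section
/- Let n ≥ a_1 > a_2 > ⋯ > a_r ≥ 1 be a decreasing sequence of integers and set w = (∏_{j=a_1}^{n} s_j)(∏_{j=a_2}^{n} s_j)⋯(∏_{j=a_{r−1}}^{n} s_j)(∏_{j=a_r}^{n−1} s_j) in the Coxeter group W of type Cₙ, where ∏_{j=a}^{b} s_j denotes s_a s_{a+1} ⋯ s_b. Then this expression is reduced; that is, ℓ(w) = Σ_{j=1}^{r−1} (n + 1 − a_j) + (n − a_r). -/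
/-!
Let `(W, S)` be the Coxeter system of type `Cₙ` (`n ≥ 3`), with simple reflections
`s_1, …, s_n` and `(s_i s_{i+1})³ = 1` for `1 ≤ i ≤ n-2`, `(s_{n-1} s_n)⁴ = 1`,
`(s_i s_j)² = 1` for `|i - j| ≥ 2`; its Coxeter matrix is `CoxeterMatrix.Bₙ n`.

STATEMENT: if `n ≥ a_1 > a_2 > ⋯ > a_r ≥ 1` and
`w = (s_{a_1} ⋯ s_n)(s_{a_2} ⋯ s_n) ⋯ (s_{a_{r-1}} ⋯ s_n)(s_{a_r} ⋯ s_{n-1})`,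
then this expression is reduced, i.e. `ℓ(w) = Σ_{j=1}^{r-1} (n + 1 - a_j) + (n - a_r)`.
-/



open Equiv (swap)
open Equiv.Perm

noncomputable section

/-- Signed permutation attached to the `i`-th simple reflection (1-indexed). -/
def sig (n i : ℕ) : Equiv.Perm ℤ :=
  if i = n then Equiv.swap (n : ℤ) (-(n:ℤ))
  else (Equiv.swap (i:ℤ) ((i:ℤ)+1)) * (Equiv.swap (-(i:ℤ)) (-(i:ℤ)-1))

lemma swap_commute_of_ne {a b x y : ℤ} (h1 : a ≠ x) (h2 : a ≠ y) (h3 : b ≠ x) (h4 : b ≠ y) :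
    Commute (Equiv.swap a b) (Equiv.swap x y) := by
  apply Equiv.Perm.Disjoint.commute
  intro z
  by_cases hz : z = a ∨ z = b
  · right
    rcases hz with hz | hz <;> subst hz <;>
      exact Equiv.swap_apply_of_ne_of_ne (by omega) (by omega)
  · left
    push_neg at hz
    exact Equiv.swap_apply_of_ne_of_ne hz.1 hz.2

lemma braid3 {a b c : ℤ} (hab : a ≠ b) (hbc : b ≠ c) (hac : a ≠ c) :
    (Equiv.swap a b * Equiv.swap b c) ^ 3 = 1 := by
  set u := Equiv.swap a b with hu
  set v := Equiv.swap b c with hv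
  have h1 : v * u * v = Equiv.swap c a := Equiv.swap_mul_swap_mul_swap hab hac
  have h3 : (u * v) ^ 3 = u * (v * u * v) * (u * v) := by
    simp only [pow_succ, pow_zero, one_mul, mul_assoc]
  rw [h3, h1]
  have h4 : u * Equiv.swap c a * (u * v) = (u * Equiv.swap c a * u) * v := by
    simp only [mul_assoc]
  rw [h4]
  have h5 : u * Equiv.swap c a * u = Equiv.swap (u c) (u a) := by
    have := Equiv.swap_apply_apply u c a
    rw [this, hu, Equiv.swap_inv, ← hu]
  rw [h5, hu, Equiv.swap_apply_of_ne_of_ne hac.symm hbc.symm, Equiv.swap_apply_left,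
    Equiv.swap_comm c b, hv, Equiv.swap_mul_self]

lemma order4 {c b : ℤ} (hc : 1 ≤ c) (hb : b = c + 1) :
    ((Equiv.swap c b * Equiv.swap (-c) (-b)) * Equiv.swap b (-b)) ^ 4 = 1 := by
  set A := Equiv.swap c b
  set B := Equiv.swap (-c) (-b)
  set C := Equiv.swap b (-b)
  set D := Equiv.swap c (-c) with hD
  have hsq : (A * B * C) * (A * B * C) = D * C := by
    ext x
    simp only [Equiv.Perm.mul_apply]
    by_cases h1 : x = c
    · rw [h1]
      rw [show C c = c from Equiv.swap_apply_of_ne_of_ne (by omega) (by omega),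
        show B c = c from Equiv.swap_apply_of_ne_of_ne (by omega) (by omega),
        show A c = b from Equiv.swap_apply_left c b,
        show C b = -b from Equiv.swap_apply_left b (-b),
        show B (-b) = -c from Equiv.swap_apply_right (-c) (-b),
        show A (-c) = -c from Equiv.swap_apply_of_ne_of_ne (by omega) (by omega),
        show D c = -c from Equiv.swap_apply_left c (-c)]
    · by_cases h2 : x = b
      · rw [h2]
        rw [show C b = -b from Equiv.swap_apply_left b (-b),
          show B (-b) = -c from Equiv.swap_apply_right (-c) (-b),
          show A (-c) = -c from Equiv.swap_apply_of_ne_of_ne (by omega) (by omega),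
          show C (-c) = -c from Equiv.swap_apply_of_ne_of_ne (by omega) (by omega),
          show B (-c) = -b from Equiv.swap_apply_left (-c) (-b),
          show A (-b) = -b from Equiv.swap_apply_of_ne_of_ne (by omega) (by omega),
          show D (-b) = -b from Equiv.swap_apply_of_ne_of_ne (by omega) (by omega)]
      · by_cases h3 : x = -c
        · rw [h3]
          rw [show C (-c) = -c from Equiv.swap_apply_of_ne_of_ne (by omega) (by omega),
            show B (-c) = -b from Equiv.swap_apply_left (-c) (-b),
            show A (-b) = -b from Equiv.swap_apply_of_ne_of_ne (by omega) (by omega),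
            show C (-b) = b from Equiv.swap_apply_right b (-b),
            show B b = b from Equiv.swap_apply_of_ne_of_ne (by omega) (by omega),
            show A b = c from Equiv.swap_apply_right c b,
            show D (-c) = c from Equiv.swap_apply_right c (-c)]
        · by_cases h4 : x = -b
          · rw [h4]
            rw [show C (-b) = b from Equiv.swap_apply_right b (-b),
              show B b = b from Equiv.swap_apply_of_ne_of_ne (by omega) (by omega),
              show A b = c from Equiv.swap_apply_right c b,
              show C c = c from Equiv.swap_apply_of_ne_of_ne (by omega) (by omega),
              show B c = c from Equiv.swap_apply_of_ne_of_ne (by omega) (by omega),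
              show A c = b from Equiv.swap_apply_left c b,
              show D b = b from Equiv.swap_apply_of_ne_of_ne (by omega) (by omega)]
          · rw [show C x = x from Equiv.swap_apply_of_ne_of_ne (by omega) (by omega),
              show B x = x from Equiv.swap_apply_of_ne_of_ne (by omega) (by omega),
              show A x = x from Equiv.swap_apply_of_ne_of_ne (by omega) (by omega),
              show C x = x from Equiv.swap_apply_of_ne_of_ne (by omega) (by omega),
              show B x = x from Equiv.swap_apply_of_ne_of_ne (by omega) (by omega),
              show A x = x from Equiv.swap_apply_of_ne_of_ne (by omega) (by omega),
              show D x = x from Equiv.swap_apply_of_ne_of_ne (by omega) (by omega)]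
  have hCD : Commute D C := swap_commute_of_ne (by omega) (by omega) (by omega) (by omega)
  have h4 : (A * B * C) ^ 4 = ((A * B * C) * (A * B * C)) * ((A * B * C) * (A * B * C)) := by
    simp only [pow_succ, pow_zero, one_mul, mul_assoc]
  rw [h4, hsq]
  have : D * C * (D * C) = (D * D) * (C * C) := by
    rw [show D * C * (D * C) = D * (C * D) * C by simp only [mul_assoc], hCD.symm.eq,
      show D * (D * C) * C = D * D * (C * C) by simp only [mul_assoc]]
  rw [this, hD, Equiv.swap_mul_self, Equiv.swap_mul_self, one_mul]

lemma pow2_of_commute {G : Type*} [Group G] {x y : G} (hx : x * x = 1) (hy : y * y = 1)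
    (h : Commute x y) : (x * y) ^ 2 = 1 := by
  have : (x * y) ^ 2 = x * (y * x) * y := by
    simp only [pow_succ, pow_zero, one_mul, mul_assoc]
  rw [this, ← h.eq, show x * (x * y) * y = (x * x) * (y * y) by simp only [mul_assoc],
    hx, hy, one_mul]

lemma pow_flip {G : Type*} [Group G] {x y : G} (hx : x * x = 1) (hy : y * y = 1)
    {k : ℕ} (h : (x * y) ^ k = 1) : (y * x) ^ k = 1 := by
  have hinv : y * x = (x * y)⁻¹ := by
    rw [mul_inv_rev, show y⁻¹ = y from by rw [inv_eq_iff_mul_eq_one, hy],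
      show x⁻¹ = x from by rw [inv_eq_iff_mul_eq_one, hx]]
  rw [hinv, inv_pow, h, inv_one]

lemma sig_mul_self (n i : ℕ) (h1 : 1 ≤ i) : sig n i * sig n i = 1 := by
  unfold sig
  split_ifs with h
  · exact Equiv.swap_mul_self _ _
  · have hAB : Commute (Equiv.swap (i:ℤ) ((i:ℤ)+1)) (Equiv.swap (-(i:ℤ)) (-(i:ℤ)-1)) :=
      swap_commute_of_ne (by omega) (by omega) (by omega) (by omega)
    rw [show (Equiv.swap (i:ℤ) ((i:ℤ)+1) * Equiv.swap (-(i:ℤ)) (-(i:ℤ)-1)) *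
        (Equiv.swap (i:ℤ) ((i:ℤ)+1) * Equiv.swap (-(i:ℤ)) (-(i:ℤ)-1)) =
        Equiv.swap (i:ℤ) ((i:ℤ)+1) * (Equiv.swap (-(i:ℤ)) (-(i:ℤ)-1) *
        Equiv.swap (i:ℤ) ((i:ℤ)+1)) * Equiv.swap (-(i:ℤ)) (-(i:ℤ)-1) from by
          simp only [mul_assoc], ← hAB.eq,
      show Equiv.swap (i:ℤ) ((i:ℤ)+1) * (Equiv.swap (i:ℤ) ((i:ℤ)+1) *
        Equiv.swap (-(i:ℤ)) (-(i:ℤ)-1)) * Equiv.swap (-(i:ℤ)) (-(i:ℤ)-1) =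
        (Equiv.swap (i:ℤ) ((i:ℤ)+1) * Equiv.swap (i:ℤ) ((i:ℤ)+1)) *
        (Equiv.swap (-(i:ℤ)) (-(i:ℤ)-1) * Equiv.swap (-(i:ℤ)) (-(i:ℤ)-1)) from by
          simp only [mul_assoc],
      Equiv.swap_mul_self, Equiv.swap_mul_self, one_mul]

lemma sig_commute (n i j : ℕ) (h1 : 1 ≤ i) (h2 : i + 2 ≤ j) (h3 : j ≤ n) :
    Commute (sig n i) (sig n j) := by
  unfold sig
  have hin : ¬ (i = n) := by omega
  rw [if_neg hin]
  split_ifs with h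
  · exact Commute.mul_left
      (swap_commute_of_ne (by omega) (by omega) (by omega) (by omega))
      (swap_commute_of_ne (by omega) (by omega) (by omega) (by omega))
  · exact Commute.mul_left
      (Commute.mul_right
        (swap_commute_of_ne (by omega) (by omega) (by omega) (by omega))
        (swap_commute_of_ne (by omega) (by omega) (by omega) (by omega)))
      (Commute.mul_right
        (swap_commute_of_ne (by omega) (by omega) (by omega) (by omega))
        (swap_commute_of_ne (by omega) (by omega) (by omega) (by omega)))

lemma sig_braid (n i : ℕ) (h1 : 1 ≤ i) (h2 : i + 2 ≤ n) :
    (sig n i * sig n (i+1)) ^ 3 = 1 := by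
  unfold sig
  rw [if_neg (by omega), if_neg (by omega)]
  have ec1 : ((i+1 : ℕ) : ℤ) = (i:ℤ) + 1 := by push_cast; ring
  rw [ec1]
  have ec2 : ((i:ℤ)+1) + 1 = (i:ℤ) + 2 := by ring
  have ec3 : (-((i:ℤ)+1)) = -(i:ℤ)-1 := by ring
  have ec4 : (-(i:ℤ)-1-1) = -(i:ℤ)-2 := by ring
  rw [ec2, ec3, ec4]
  set A := Equiv.swap (i:ℤ) ((i:ℤ)+1)
  set A' := Equiv.swap ((i:ℤ)+1) ((i:ℤ)+2)
  set B := Equiv.swap (-(i:ℤ)) (-(i:ℤ)-1)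
  set B' := Equiv.swap (-(i:ℤ)-1) (-(i:ℤ)-2)
  have hBA' : Commute B A' := swap_commute_of_ne (by omega) (by omega) (by omega) (by omega)
  have hfact : (A * B) * (A' * B') = (A * A') * (B * B') := by
    rw [show (A * B) * (A' * B') = A * (B * A') * B' from by simp only [mul_assoc],
      hBA'.eq, show A * (A' * B) * B' = (A * A') * (B * B') from by simp only [mul_assoc]]
  rw [hfact]
  have hcomm : Commute (A * A') (B * B') :=
    Commute.mul_left
      (Commute.mul_right
        (swap_commute_of_ne (by omega) (by omega) (by omega) (by omega))
        (swap_commute_of_ne (by omega) (by omega) (by omega) (by omega)))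
      (Commute.mul_right
        (swap_commute_of_ne (by omega) (by omega) (by omega) (by omega))
        (swap_commute_of_ne (by omega) (by omega) (by omega) (by omega)))
  rw [hcomm.mul_pow, braid3 (by omega) (by omega) (by omega),
    braid3 (by omega) (by omega) (by omega), one_mul]

lemma sig_order4 (n : ℕ) (hn : 2 ≤ n) : (sig n (n-1) * sig n n) ^ 4 = 1 := by
  unfold sig
  rw [if_neg (by omega), if_pos rfl]
  have ec1 : ((n-1 : ℕ) : ℤ) + 1 = (n:ℤ) := by
    have : ((n-1:ℕ):ℤ) = (n:ℤ) - 1 := by omega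
    omega
  have ec2 : (-((n-1:ℕ):ℤ) - 1) = -(n:ℤ) := by omega
  rw [ec1, ec2]
  exact order4 (by omega) (by omega)

lemma isLiftable (n : ℕ) (hn : 3 ≤ n) :
    CoxeterMatrix.IsLiftable (CoxeterMatrix.Bₙ n) (fun k : Fin n => sig n (k.val + 1)) := by
  intro i j
  have hM : (CoxeterMatrix.Bₙ n) i j =
      (if i = j then 1
        else if (i.val = n - 1 ∧ j.val = n - 2) ∨ (j.val = n - 1 ∧ i.val = n - 2) then 4
        else if j.val + 1 = i.val ∨ i.val + 1 = j.val then 3 else 2) := by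
    show (CoxeterMatrix.Bₙ n).M i j = _
    unfold CoxeterMatrix.Bₙ CoxeterMatrix.B
    simp only [Matrix.of_apply]
  have hi := i.isLt
  have hj := j.isLt
  have hsq : ∀ k : ℕ, 1 ≤ k → sig n k * sig n k = 1 := fun k hk => sig_mul_self n k hk
  rw [hM]
  change (sig n (i.val + 1) * sig n (j.val + 1)) ^ _ = 1
  by_cases hij : i = j
  · rw [if_pos hij, pow_one]
    have : i.val = j.val := by rw [hij]
    rw [this]
    exact hsq _ (by omega)
  · rw [if_neg hij]
    have hvij : i.val ≠ j.val := fun h => hij (Fin.ext h)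
    by_cases htop : (i.val = n - 1 ∧ j.val = n - 2) ∨ (j.val = n - 1 ∧ i.val = n - 2)
    · rw [if_pos htop]
      rcases htop with ⟨h1, h2⟩ | ⟨h1, h2⟩
      · -- i is top (s_n), j is s_{n-1}
        have e1 : i.val + 1 = n := by omega
        have e2 : j.val + 1 = n - 1 := by omega
        rw [e1, e2]
        exact pow_flip (hsq _ (by omega)) (hsq _ (by omega)) (sig_order4 n (by omega))
      · have e1 : j.val + 1 = n := by omega
        have e2 : i.val + 1 = n - 1 := by omega
        rw [e1, e2]
        exact sig_order4 n (by omega)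
    · rw [if_neg htop]
      by_cases hadj : j.val + 1 = i.val ∨ i.val + 1 = j.val
      · rw [if_pos hadj]
        rcases hadj with h | h
        · -- i = j + 1
          rw [show i.val + 1 = (j.val + 1) + 1 from by omega]
          exact pow_flip (hsq _ (by omega)) (hsq _ (by omega))
            (sig_braid n (j.val+1) (by omega) (by omega))
        · rw [show j.val + 1 = (i.val + 1) + 1 from by omega]
          exact sig_braid n (i.val+1) (by omega) (by omega)
      · rw [if_neg hadj]
        rcases Nat.lt_or_ge i.val j.val with h | h
        · exact pow2_of_commute (hsq _ (by omega)) (hsq _ (by omega))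
            (sig_commute n (i.val+1) (j.val+1) (by omega) (by omega) (by omega))
        · exact pow2_of_commute (hsq _ (by omega)) (hsq _ (by omega))
            (sig_commute n (j.val+1) (i.val+1) (by omega) (by omega) (by omega)).symm


set_option maxHeartbeats 1000000 in
lemma sig_apply_lt {n i : ℕ} (h1 : 1 ≤ i) (hin : i < n) (x : ℤ) :
    sig n i x = if x = (i:ℤ) then (i:ℤ)+1 else if x = (i:ℤ)+1 then (i:ℤ)
      else if x = -(i:ℤ) then -(i:ℤ)-1 else if x = -(i:ℤ)-1 then -(i:ℤ) else x := by
  unfold sig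
  rw [if_neg (by omega)]
  simp only [Equiv.Perm.mul_apply, Equiv.swap_apply_def]
  split_ifs <;> omega

lemma sig_apply_eq {n : ℕ} (hn : 1 ≤ n) (x : ℤ) :
    sig n n x = if x = (n:ℤ) then -(n:ℤ) else if x = -(n:ℤ) then (n:ℤ) else x := by
  unfold sig
  rw [if_pos rfl]
  simp only [Equiv.swap_apply_def]

/-- `g` is an odd (signed) permutation mapping `[1,n]` into `±[1,n]`. -/
def Gd (n : ℕ) (g : Equiv.Perm ℤ) : Prop :=
  (∀ x : ℤ, g (-x) = - (g x)) ∧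
    ∀ x : ℤ, 1 ≤ x → x ≤ (n:ℤ) →
      (1 ≤ g x ∧ g x ≤ (n:ℤ)) ∨ (-(n:ℤ) ≤ g x ∧ g x ≤ -1)

lemma gd_one (n : ℕ) : Gd n 1 := by
  constructor
  · intro x; simp
  · intro x h1 h2; left; simp [h1, h2]

lemma gd_mul {n : ℕ} {g h : Equiv.Perm ℤ} (hg : Gd n g) (hh : Gd n h) : Gd n (g * h) := by
  obtain ⟨hg1, hg2⟩ := hg
  obtain ⟨hh1, hh2⟩ := hh
  constructor
  · intro x
    simp only [Equiv.Perm.mul_apply, hh1, hg1]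
  · intro x h1 h2
    simp only [Equiv.Perm.mul_apply]
    rcases hh2 x h1 h2 with ⟨ha, hb⟩ | ⟨ha, hb⟩
    · exact hg2 _ ha hb
    · have : g (h x) = - g (- h x) := by
        rw [← hg1]; simp
      rw [this]
      rcases hg2 (- h x) (by omega) (by omega) with ⟨hc, hd⟩ | ⟨hc, hd⟩
      · right; omega
      · left; omega

lemma gd_sig {n i : ℕ} (h1 : 1 ≤ i) (h2 : i ≤ n) : Gd n (sig n i) := by
  by_cases hin : i = n
  · subst hin
    constructor
    · intro x
      rw [sig_apply_eq h1, sig_apply_eq h1]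
      split_ifs <;> omega
    · intro x hx1 hx2
      rw [sig_apply_eq h1]
      split_ifs <;> omega
  · have hlt : i < n := by omega
    constructor
    · intro x
      rw [sig_apply_lt h1 hlt, sig_apply_lt h1 hlt]
      split_ifs <;> omega
    · intro x hx1 hx2
      rw [sig_apply_lt h1 hlt]
      split_ifs <;> omega

/-- Folded coordinate: positives to `[1,n]`, negatives to `[n+1, 2n]`. -/
def ph (n : ℕ) (v : ℤ) : ℤ := if 0 < v then v else 2*(n:ℤ)+1+v

/-- A pair/diagonal term of the type-B inversion statistic. -/
def tm (n : ℕ) (x y u v : ℤ) : ℕ :=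
  (if x < y ∧ ph n v < ph n u then 1 else 0)
  + (if x < y ∧ 2*(n:ℤ)+1 < ph n u + ph n v then 1 else 0)
  + (if x = y ∧ (n:ℤ) < ph n u then 1 else 0)

/-- The type-B inversion statistic of a signed permutation. -/
def NN (n : ℕ) (g : Equiv.Perm ℤ) : ℕ :=
  ∑ z ∈ Finset.Icc (1:ℤ) (n:ℤ) ×ˢ Finset.Icc (1:ℤ) (n:ℤ), tm n z.1 z.2 (g z.1) (g z.2)

lemma NN_one (n : ℕ) : NN n 1 = 0 := by
  apply Finset.sum_eq_zero
  intro z hz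
  rw [Finset.mem_product, Finset.mem_Icc, Finset.mem_Icc] at hz
  simp only [Equiv.Perm.one_apply]
  unfold tm ph
  split_ifs <;> omega

lemma sum_split {α : Type*} [DecidableEq α] (P : Finset α) (p q : α) (hp : p ∈ P)
    (hq : q ∈ P) (hpq : p ≠ q) (f : α → ℕ) :
    ∑ z ∈ P, f z = ∑ z ∈ (P.erase p).erase q, f z + f p + f q := by
  rw [← Finset.add_sum_erase _ f hp,
    ← Finset.add_sum_erase _ f (Finset.mem_erase.mpr ⟨Ne.symm hpq, hq⟩)]
  omega

set_option maxHeartbeats 1000000 in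
lemma NN_step_lt {n i : ℕ} (g : Equiv.Perm ℤ) (h1 : 1 ≤ i) (h2 : i + 1 ≤ n) :
    NN n (g * sig n i) + (if ph n (g ((i:ℤ)+1)) < ph n (g (i:ℤ)) then 1 else 0)
      = NN n g + (if ph n (g (i:ℤ)) < ph n (g ((i:ℤ)+1)) then 1 else 0) := by
  classical
  set τ := Equiv.swap (i:ℤ) ((i:ℤ)+1) with hτ
  set P := Finset.Icc (1:ℤ) (n:ℤ) ×ˢ Finset.Icc (1:ℤ) (n:ℤ) with hP
  have hsig : ∀ x : ℤ, 1 ≤ x → sig n i x = τ x := by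
    intro x hx
    rw [sig_apply_lt h1 (by omega), hτ, Equiv.swap_apply_def]
    split_ifs <;> omega
  have hNN1 : NN n (g * sig n i) = ∑ z ∈ P, tm n z.1 z.2 (g (τ z.1)) (g (τ z.2)) := by
    unfold NN
    rw [← hP]
    apply Finset.sum_congr rfl
    intro z hz
    rw [hP, Finset.mem_product, Finset.mem_Icc, Finset.mem_Icc] at hz
    simp only [Equiv.Perm.mul_apply]
    rw [hsig z.1 hz.1.1, hsig z.2 hz.2.1]
  have hmemτ : ∀ x : ℤ, x ∈ Finset.Icc (1:ℤ) (n:ℤ) ↔ τ x ∈ Finset.Icc (1:ℤ) (n:ℤ) := by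
    intro x
    simp only [Finset.mem_Icc, hτ, Equiv.swap_apply_def]
    split_ifs <;> omega
  have hre : ∑ z ∈ P, tm n z.1 z.2 (g (τ z.1)) (g (τ z.2))
      = ∑ z ∈ P, tm n (τ z.1) (τ z.2) (g z.1) (g z.2) := by
    apply Finset.sum_equiv (Equiv.prodCongr τ τ)
    · intro z
      rw [hP]
      simp only [Finset.mem_product, Equiv.prodCongr_apply, Prod.map_fst, Prod.map_snd]
      rw [← hmemτ z.1, ← hmemτ z.2]
    · intro z hz
      simp only [Equiv.prodCongr_apply, Prod.map_fst, Prod.map_snd]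
      rw [show τ (τ z.1) = z.1 from Equiv.swap_apply_self _ _ _,
        show τ (τ z.2) = z.2 from Equiv.swap_apply_self _ _ _]
  set p : ℤ × ℤ := ((i:ℤ), (i:ℤ)+1) with hp'
  set q : ℤ × ℤ := ((i:ℤ)+1, (i:ℤ)) with hq'
  have hp : p ∈ P := by
    rw [hp', hP]
    simp only [Finset.mem_product, Finset.mem_Icc]
    omega
  have hq : q ∈ P := by
    rw [hq', hP]
    simp only [Finset.mem_product, Finset.mem_Icc]
    omega
  have hpq : p ≠ q := by
    rw [hp', hq']
    intro hcon
    rw [Prod.mk.injEq] at hcon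
    omega
  have hNN2 : NN n g = ∑ z ∈ P, tm n z.1 z.2 (g z.1) (g z.2) := by
    unfold NN; rw [← hP]
  rw [hNN1, hre, hNN2, sum_split P p q hp hq hpq, sum_split P p q hp hq hpq]
  have hsame : ∑ z ∈ (P.erase p).erase q, tm n (τ z.1) (τ z.2) (g z.1) (g z.2)
      = ∑ z ∈ (P.erase p).erase q, tm n z.1 z.2 (g z.1) (g z.2) := by
    apply Finset.sum_congr rfl
    intro z hz
    rw [Finset.mem_erase, Finset.mem_erase] at hz
    obtain ⟨hzq, hzp, hzP⟩ := hz
    rw [hP, Finset.mem_product, Finset.mem_Icc, Finset.mem_Icc] at hzP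
    have hzp' : ¬ (z.1 = (i:ℤ) ∧ z.2 = (i:ℤ)+1) := by
      intro h
      exact hzp (Prod.ext h.1 h.2)
    have hzq' : ¬ (z.1 = (i:ℤ)+1 ∧ z.2 = (i:ℤ)) := by
      intro h
      exact hzq (Prod.ext h.1 h.2)
    have e1 : (τ z.1 < τ z.2) = (z.1 < z.2) := by
      apply propext
      rw [hτ]
      simp only [Equiv.swap_apply_def]
      split_ifs <;> constructor <;> intro <;> omega
    have e2 : (τ z.1 = τ z.2) = (z.1 = z.2) := by
      apply propext
      exact τ.apply_eq_iff_eq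
    unfold tm
    simp only [e1, e2]
  rw [hsame]
  have e1 : τ (i:ℤ) = (i:ℤ)+1 := Equiv.swap_apply_left _ _
  have e2 : τ ((i:ℤ)+1) = (i:ℤ) := Equiv.swap_apply_right _ _
  have T1 : tm n (τ p.1) (τ p.2) (g p.1) (g p.2) = 0 := by
    show tm n (τ (i:ℤ)) (τ ((i:ℤ)+1)) (g (i:ℤ)) (g ((i:ℤ)+1)) = 0
    rw [e1, e2]; unfold tm; split_ifs <;> omega
  have T2 : tm n (τ q.1) (τ q.2) (g q.1) (g q.2) =
      (if ph n (g (i:ℤ)) < ph n (g ((i:ℤ)+1)) then 1 else 0)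
      + (if 2*(n:ℤ)+1 < ph n (g ((i:ℤ)+1)) + ph n (g (i:ℤ)) then 1 else 0) := by
    show tm n (τ ((i:ℤ)+1)) (τ (i:ℤ)) (g ((i:ℤ)+1)) (g (i:ℤ)) = _
    rw [e1, e2]; unfold tm
    generalize ph n (g (i:ℤ)) = A
    generalize ph n (g ((i:ℤ)+1)) = B
    split_ifs <;> omega
  have T3 : tm n p.1 p.2 (g p.1) (g p.2) =
      (if ph n (g ((i:ℤ)+1)) < ph n (g (i:ℤ)) then 1 else 0)
      + (if 2*(n:ℤ)+1 < ph n (g (i:ℤ)) + ph n (g ((i:ℤ)+1)) then 1 else 0) := by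
    show tm n (i:ℤ) ((i:ℤ)+1) (g (i:ℤ)) (g ((i:ℤ)+1)) = _
    unfold tm
    generalize ph n (g (i:ℤ)) = A
    generalize ph n (g ((i:ℤ)+1)) = B
    split_ifs <;> omega
  have T4 : tm n q.1 q.2 (g q.1) (g q.2) = 0 := by
    show tm n ((i:ℤ)+1) (i:ℤ) (g ((i:ℤ)+1)) (g (i:ℤ)) = 0
    unfold tm; split_ifs <;> omega
  rw [T1, T2, T3, T4]
  generalize ph n (g (i:ℤ)) = A
  generalize ph n (g ((i:ℤ)+1)) = B
  split_ifs <;> omega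

set_option maxHeartbeats 1000000 in
lemma NN_step_n {n : ℕ} (g : Equiv.Perm ℤ) (hn : 1 ≤ n) (hg : Gd n g) :
    NN n (g * sig n n) + (if (n:ℤ) < ph n (g (n:ℤ)) then 1 else 0)
      = NN n g + (if ph n (g (n:ℤ)) ≤ (n:ℤ) then 1 else 0) := by
  classical
  set P := Finset.Icc (1:ℤ) (n:ℤ) ×ˢ Finset.Icc (1:ℤ) (n:ℤ) with hP
  have hodd := hg.1
  have hval : (g * sig n n) ((n:ℤ)) = - g (n:ℤ) := by
    simp only [Equiv.Perm.mul_apply]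
    rw [sig_apply_eq hn, if_pos rfl]
    exact hodd _
  have hfix : ∀ x : ℤ, 1 ≤ x → x < (n:ℤ) → (g * sig n n) x = g x := by
    intro x hx1 hx2
    simp only [Equiv.Perm.mul_apply]
    rw [sig_apply_eq hn, if_neg (by omega), if_neg (by omega)]
  have hphn : ph n (- g (n:ℤ)) = 2*(n:ℤ)+1 - ph n (g (n:ℤ)) := by
    rcases hg.2 (n:ℤ) (by omega) le_rfl with ⟨ha, hb⟩ | ⟨ha, hb⟩ <;>
      (unfold ph; split_ifs <;> omega)
  set d : ℤ × ℤ := ((n:ℤ), (n:ℤ)) with hd'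
  have hd : d ∈ P := by
    rw [hd', hP]
    simp only [Finset.mem_product, Finset.mem_Icc]
    omega
  have hNN1 : NN n (g * sig n n)
      = ∑ z ∈ P.erase d, tm n z.1 z.2 ((g * sig n n) z.1) ((g * sig n n) z.2)
        + tm n d.1 d.2 ((g * sig n n) d.1) ((g * sig n n) d.2) := by
    unfold NN
    rw [← hP, ← Finset.add_sum_erase _ _ hd]
    omega
  have hNN2 : NN n g
      = ∑ z ∈ P.erase d, tm n z.1 z.2 (g z.1) (g z.2) + tm n d.1 d.2 (g d.1) (g d.2) := by
    unfold NN
    rw [← hP, ← Finset.add_sum_erase _ _ hd]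
    omega
  have hsame : ∑ z ∈ P.erase d, tm n z.1 z.2 ((g * sig n n) z.1) ((g * sig n n) z.2)
      = ∑ z ∈ P.erase d, tm n z.1 z.2 (g z.1) (g z.2) := by
    apply Finset.sum_congr rfl
    intro z hz
    rw [Finset.mem_erase] at hz
    obtain ⟨hzd, hzP⟩ := hz
    rw [hP, Finset.mem_product, Finset.mem_Icc, Finset.mem_Icc] at hzP
    have hzd' : ¬ (z.1 = (n:ℤ) ∧ z.2 = (n:ℤ)) := by
      intro h
      exact hzd (Prod.ext h.1 h.2)
    by_cases hz2 : z.2 = (n:ℤ)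
    · have hz1 : z.1 < (n:ℤ) := by
        rcases lt_or_eq_of_le hzP.1.2 with h | h
        · exact h
        · exact absurd ⟨h, hz2⟩ hzd'
      rw [hfix z.1 hzP.1.1 hz1, hz2, hval]
      unfold tm
      rw [hphn]
      generalize ph n (g z.1) = A
      generalize ph n (g (n:ℤ)) = B
      split_ifs <;> omega
    · have hz2' : z.2 < (n:ℤ) := lt_of_le_of_ne hzP.2.2 hz2
      by_cases hz1 : z.1 = (n:ℤ)
      · rw [hfix z.2 hzP.2.1 hz2', hz1, hval]
        unfold tm
        rw [hphn]
        generalize ph n (g z.2) = A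
        generalize ph n (g (n:ℤ)) = B
        split_ifs <;> omega
      · have hz1' : z.1 < (n:ℤ) := lt_of_le_of_ne hzP.1.2 hz1
        rw [hfix z.1 hzP.1.1 hz1', hfix z.2 hzP.2.1 hz2']
  have hdval : tm n d.1 d.2 ((g * sig n n) d.1) ((g * sig n n) d.2)
      = (if ph n (g (n:ℤ)) ≤ (n:ℤ) then 1 else 0) := by
    show tm n (n:ℤ) (n:ℤ) ((g * sig n n) (n:ℤ)) ((g * sig n n) (n:ℤ)) = _
    rw [hval]
    unfold tm
    rw [hphn]
    generalize ph n (g (n:ℤ)) = A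
    split_ifs <;> omega
  have hdval2 : tm n d.1 d.2 (g d.1) (g d.2)
      = (if (n:ℤ) < ph n (g (n:ℤ)) then 1 else 0) := by
    show tm n (n:ℤ) (n:ℤ) (g (n:ℤ)) (g (n:ℤ)) = _
    unfold tm
    generalize ph n (g (n:ℤ)) = A
    split_ifs <;> omega
  rw [hNN1, hNN2, hsame, hdval, hdval2]
  generalize ph n (g (n:ℤ)) = A
  split_ifs <;> omega

lemma NN_asc_lt {n i : ℕ} (g : Equiv.Perm ℤ) (h1 : 1 ≤ i) (h2 : i + 1 ≤ n)
    (hasc : ph n (g (i:ℤ)) < ph n (g ((i:ℤ)+1))) :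
    NN n (g * sig n i) = NN n g + 1 := by
  have := NN_step_lt g h1 h2
  rw [if_pos hasc, if_neg (by omega)] at this
  omega

lemma NN_asc_n {n : ℕ} (g : Equiv.Perm ℤ) (hn : 1 ≤ n) (hg : Gd n g)
    (hpos : 0 < g (n:ℤ)) : NN n (g * sig n n) = NN n g + 1 := by
  have h := NN_step_n g hn hg
  have hle : ph n (g (n:ℤ)) ≤ (n:ℤ) := by
    rcases hg.2 (n:ℤ) (by omega) le_rfl with ⟨ha, hb⟩ | ⟨ha, hb⟩ <;>
      (unfold ph; split_ifs <;> omega)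
  rw [if_pos hle, if_neg (by omega)] at h
  omega

lemma NN_le_step {n i : ℕ} (g : Equiv.Perm ℤ) (hg : Gd n g) (h1 : 1 ≤ i) (h2 : i ≤ n) :
    NN n (g * sig n i) ≤ NN n g + 1 := by
  by_cases hin : i = n
  · subst hin
    have := NN_step_n g (by omega) hg
    split_ifs at this <;> omega
  · have := NN_step_lt (n := n) (i := i) g h1 (by omega)
    split_ifs at this <;> omega

/-- The permutation of the run `s_c s_{c+1} ⋯ s_m`. -/
def PS (n c m : ℕ) : Equiv.Perm ℤ := ((List.range' c (m+1-c)).map (sig n)).prod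

lemma PS_empty {n c m : ℕ} (h : m + 1 ≤ c) : PS n c m = 1 := by
  unfold PS
  rw [show m + 1 - c = 0 from by omega, List.range'_zero]
  simp

lemma PS_succ (n c m : ℕ) (h : c ≤ m + 1) : PS n c (m+1) = PS n c m * sig n (m+1) := by
  unfold PS
  rw [show m + 1 + 1 - c = (m + 1 - c) + 1 from by omega, List.range'_1_concat,
    show c + (m + 1 - c) = m + 1 from by omega, List.map_append, List.prod_append]
  simp

lemma gd_prod (n : ℕ) (l : List ℕ) (hl : ∀ i ∈ l, 1 ≤ i ∧ i ≤ n) :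
    Gd n ((l.map (sig n)).prod) := by
  induction l with
  | nil => simpa using gd_one n
  | cons head tail ih =>
    rw [List.map_cons, List.prod_cons]
    exact gd_mul (gd_sig (hl head List.mem_cons_self).1 (hl head List.mem_cons_self).2)
      (ih fun i hi => hl i (List.mem_cons_of_mem _ hi))

lemma gd_PS (n c m : ℕ) (hc : 1 ≤ c) (hm : m ≤ n) : Gd n (PS n c m) := by
  apply gd_prod
  intro i hi
  rw [List.mem_range'_1] at hi
  omega

lemma PS_eval (n c : ℕ) (hc : 1 ≤ c) : ∀ m : ℕ, c ≤ m + 1 → m ≤ n - 1 →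
    (PS n c m ((m:ℤ)+1) = (c:ℤ))
    ∧ (∀ x : ℤ, (m:ℤ)+1 < x → PS n c m x = x)
    ∧ (∀ x : ℤ, 0 < x → x < (c:ℤ) → PS n c m x = x)
    ∧ (∀ x : ℤ, (c:ℤ) ≤ x → x ≤ (m:ℤ) → PS n c m x = x+1) := by
  intro m
  induction m with
  | zero =>
    intro h1 h2
    have hc1 : c = 1 := by omega
    rw [hc1, PS_empty (by omega)]
    refine ⟨by simp, fun x hx => by simp, fun x hx1 hx2 => by simp, fun x hx1 hx2 => by omega⟩
  | succ m ih =>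
    intro h1 h2
    by_cases hcm : c = m + 2
    · rw [PS_empty (by omega)]
      refine ⟨by simp; omega, fun x hx => by simp, fun x hx1 hx2 => by simp,
        fun x hx1 hx2 => by push_cast at hx1 hx2 ⊢; omega⟩
    · have hc3 : c ≤ m + 1 := by omega
      have hmn : m ≤ n - 1 := by omega
      have hm1n : m + 1 < n := by omega
      obtain ⟨iha, ihb, ihc, ihd⟩ := ih (by omega) hmn
      have hps : PS n c (m+1) = PS n c m * sig n (m+1) := PS_succ n c m hc3
      have hcast : ((m+1 : ℕ) : ℤ) = (m:ℤ)+1 := by push_cast; ring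
      refine ⟨?_, ?_, ?_, ?_⟩
      · rw [hps]
        simp only [Equiv.Perm.mul_apply]
        rw [sig_apply_lt (by omega) hm1n, hcast]
        rw [if_neg (by omega), if_pos rfl]
        exact iha
      · intro x hx
        rw [hcast] at hx
        rw [hps]
        simp only [Equiv.Perm.mul_apply]
        rw [sig_apply_lt (by omega) hm1n, hcast,
          if_neg (by omega), if_neg (by omega), if_neg (by omega), if_neg (by omega)]
        exact ihb x (by omega)
      · intro x hx1 hx2
        rw [hps]
        simp only [Equiv.Perm.mul_apply]
        rw [sig_apply_lt (by omega) hm1n, hcast,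
          if_neg (by omega), if_neg (by omega), if_neg (by omega), if_neg (by omega)]
        exact ihc x hx1 hx2
      · intro x hx1 hx2
        rw [hcast] at hx2
        rw [hps]
        simp only [Equiv.Perm.mul_apply]
        rw [sig_apply_lt (by omega) hm1n, hcast]
        by_cases hxm : x = (m:ℤ)+1
        · rw [if_pos hxm]
          rw [ihb ((m:ℤ)+1+1) (by omega)]
          omega
        · rw [if_neg hxm, if_neg (by omega), if_neg (by omega), if_neg (by omega)]
          exact ihd x hx1 (by omega)

lemma PS_full_eval (n c : ℕ) (hc : 1 ≤ c) (hcn : c ≤ n) :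
    (∀ x : ℤ, 0 < x → x < (c:ℤ) → PS n c n x = x)
    ∧ (∀ x : ℤ, (c:ℤ) ≤ x → x ≤ (n:ℤ)-1 → PS n c n x = x+1)
    ∧ PS n c n ((n:ℤ)) = -(c:ℤ) := by
  have hn1 : 1 ≤ n := by omega
  have hcast : ((n-1 : ℕ) : ℤ) = (n:ℤ)-1 := by omega
  have htop : PS n c n = PS n c (n-1) * sig n n := by
    have := PS_succ n c (n-1) (by omega)
    rwa [show n - 1 + 1 = n from by omega] at this
  obtain ⟨iha, ihb, ihc, ihd⟩ := PS_eval n c hc (n-1) (by omega) le_rfl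
  rw [hcast] at iha ihd
  refine ⟨?_, ?_, ?_⟩
  · intro x hx1 hx2
    rw [htop]
    simp only [Equiv.Perm.mul_apply]
    rw [sig_apply_eq hn1, if_neg (by omega), if_neg (by omega)]
    exact ihc x hx1 hx2
  · intro x hx1 hx2
    rw [htop]
    simp only [Equiv.Perm.mul_apply]
    rw [sig_apply_eq hn1, if_neg (by omega), if_neg (by omega)]
    exact ihd x hx1 (by omega)
  · rw [htop]
    simp only [Equiv.Perm.mul_apply]
    rw [sig_apply_eq hn1, if_pos rfl]
    have hodd := (gd_PS n c (n-1) hc (by omega)).1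
    rw [hodd]
    have iha' : PS n c (n-1) ((n:ℤ)) = (c:ℤ) := by
      have he : ((n:ℤ)) = (n:ℤ)-1+1 := by ring
      rw [he]
      exact iha
    rw [iha']

lemma ph_pos {n : ℕ} {v : ℤ} (h1 : 1 ≤ v) (h2 : v ≤ (n:ℤ)) : ph n v = v := by
  unfold ph; split_ifs <;> omega

lemma run_NN (n c : ℕ) (g : Equiv.Perm ℤ) (hc1 : 1 ≤ c) (hcn : c ≤ n)
    (hH : ∀ v : ℤ, (c:ℤ) < v → v ≤ (n:ℤ) →
      ((c:ℤ) < g v ∧ g v ≤ (n:ℤ)) ∨ (-(n:ℤ) ≤ g v ∧ g v ≤ -1))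
    (hF : ∀ v : ℤ, 1 ≤ v → v ≤ (c:ℤ) → g v = v) :
    ∀ m : ℕ, c - 1 ≤ m → m ≤ n - 1 → NN n (g * PS n c m) = NN n g + (m + 1 - c) := by
  intro m
  induction m with
  | zero =>
    intro h1 h2
    rw [PS_empty (by omega), mul_one]
    omega
  | succ m ih =>
    intro h1 h2
    by_cases hcm : c = m + 2
    · rw [PS_empty (by omega), mul_one]
      omega
    · have hc3 : c ≤ m + 1 := by omega
      have hmn : m ≤ n - 1 := by omega
      obtain ⟨pa, pb, _, _⟩ := PS_eval n c hc1 m hc3 hmn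
      rw [PS_succ n c m hc3, ← mul_assoc]
      have hcast : ((m+1 : ℕ) : ℤ) = (m:ℤ)+1 := by push_cast; ring
      have hasc : ph n ((g * PS n c m) ((m+1 : ℕ) : ℤ))
          < ph n ((g * PS n c m) (((m+1 : ℕ) : ℤ) + 1)) := by
        rw [hcast]
        simp only [Equiv.Perm.mul_apply]
        rw [pa, pb ((m:ℤ)+1+1) (by omega), hF (c:ℤ) (by omega) le_rfl]
        have hphc : ph n (c:ℤ) = (c:ℤ) := ph_pos (by omega) (by omega)
        rw [hphc]
        rcases hH ((m:ℤ)+1+1) (by omega) (by omega) with ⟨ha, hb⟩ | ⟨ha, hb⟩ <;>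
          (unfold ph; split_ifs <;> omega)
      rw [NN_asc_lt (g * PS n c m) (by omega) (by omega) hasc, ih (by omega) hmn]
      omega

lemma run_full (n c : ℕ) (g : Equiv.Perm ℤ) (hg : Gd n g) (hc1 : 1 ≤ c) (hcn : c ≤ n)
    (hH : ∀ v : ℤ, (c:ℤ) < v → v ≤ (n:ℤ) →
      ((c:ℤ) < g v ∧ g v ≤ (n:ℤ)) ∨ (-(n:ℤ) ≤ g v ∧ g v ≤ -1))
    (hF : ∀ v : ℤ, 1 ≤ v → v ≤ (c:ℤ) → g v = v) :
    NN n (g * PS n c n) = NN n g + (n + 1 - c) := by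
  have hn1 : 1 ≤ n := by omega
  have htop : PS n c n = PS n c (n-1) * sig n n := by
    have := PS_succ n c (n-1) (by omega)
    rwa [show n - 1 + 1 = n from by omega] at this
  rw [htop, ← mul_assoc]
  obtain ⟨pa, _, _, _⟩ := PS_eval n c hc1 (n-1) (by omega) le_rfl
  have hgd : Gd n (g * PS n c (n-1)) := gd_mul hg (gd_PS n c (n-1) hc1 (by omega))
  have hpos : 0 < (g * PS n c (n-1)) ((n:ℤ)) := by
    simp only [Equiv.Perm.mul_apply]
    rw [show (n:ℤ) = ((n-1:ℕ):ℤ)+1 from by omega, pa, hF (c:ℤ) (by omega) le_rfl]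
    omega
  rw [NN_asc_n (g * PS n c (n-1)) hn1 hgd hpos,
    run_NN n c g hc1 hcn hH hF (n-1) (by omega) le_rfl]
  omega

lemma run_transfer (n c c' : ℕ) (g : Equiv.Perm ℤ) (hg : Gd n g) (hc1 : 1 ≤ c) (hcn : c ≤ n)
    (hH : ∀ v : ℤ, (c:ℤ) < v → v ≤ (n:ℤ) →
      ((c:ℤ) < g v ∧ g v ≤ (n:ℤ)) ∨ (-(n:ℤ) ≤ g v ∧ g v ≤ -1))
    (hF : ∀ v : ℤ, 1 ≤ v → v ≤ (c:ℤ) → g v = v) (hc' : c' < c) :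
    (∀ v : ℤ, (c':ℤ) < v → v ≤ (n:ℤ) →
      ((c':ℤ) < (g * PS n c n) v ∧ (g * PS n c n) v ≤ (n:ℤ))
        ∨ (-(n:ℤ) ≤ (g * PS n c n) v ∧ (g * PS n c n) v ≤ -1))
    ∧ (∀ v : ℤ, 1 ≤ v → v ≤ (c':ℤ) → (g * PS n c n) v = v) := by
  obtain ⟨fa, fb, fc⟩ := PS_full_eval n c hc1 hcn
  constructor
  · intro v hv1 hv2
    simp only [Equiv.Perm.mul_apply]
    by_cases hvc : v < (c:ℤ)
    · rw [fa v (by omega) hvc, hF v (by omega) (by omega)]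
      left
      omega
    · by_cases hvn : v ≤ (n:ℤ) - 1
      · rw [fb v (by omega) hvn]
        rcases hH (v+1) (by omega) (by omega) with ⟨ha, hb⟩ | ⟨ha, hb⟩
        · left; omega
        · right; omega
      · have hveq : v = (n:ℤ) := by omega
        rw [hveq, fc, hg.1, hF (c:ℤ) (by omega) le_rfl]
        right
        omega
  · intro v hv1 hv2
    simp only [Equiv.Perm.mul_apply]
    rw [fa v (by omega) (by omega), hF v (by omega) (by omega)]

end
variable {W : Type*} [Group W]

/-- The simple reflection `s_i` (1-indexed, `1 ≤ i ≤ n`) of a Coxeter system of type `Cₙ`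
(whose Coxeter matrix is `CoxeterMatrix.Bₙ n`: bonds `m(s_i, s_{i+1}) = 3` for
`1 ≤ i ≤ n-2`, `m(s_{n-1}, s_n) = 4`, and `m(s_i, s_j) = 2` for `|i - j| ≥ 2`);
junk value `1` for `i` out of range. -/
noncomputable def sN {n : ℕ} (cs : CoxeterSystem (CoxeterMatrix.Bₙ n) W) (i : ℕ) : W :=
  if h : 1 ≤ i ∧ i ≤ n then cs.simple ⟨i - 1, by omega⟩ else 1

/-- `[a, b] := s_a s_{a+1} ⋯ s_b` (1-indexed; equal to `1` if `b < a`). -/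
noncomputable def intv {n : ℕ} (cs : CoxeterSystem (CoxeterMatrix.Bₙ n) W) (a b : ℕ) : W :=
  ((List.range' a (b + 1 - a)).map (sN cs)).prod

/-- `c` is a Coxeter element of `W`: `c = s_{τ(1)} s_{τ(2)} ⋯ s_{τ(n)}` for some
permutation `τ` of the `n` simple reflections. -/
def IsCoxeterElement {n : ℕ} (cs : CoxeterSystem (CoxeterMatrix.Bₙ n) W) (c : W) : Prop :=
  ∃ τ : Equiv.Perm (Fin n), c = cs.wordProd (List.ofFn fun k => τ k)


section PartD

variable {W : Type*} [Group W]

/-- The signed-permutation representation of the Coxeter group of type `Cₙ`. -/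
noncomputable def rho {n : ℕ} (hn : 3 ≤ n) (cs : CoxeterSystem (CoxeterMatrix.Bₙ n) W) :
    W →* Equiv.Perm ℤ :=
  cs.lift ⟨fun k : Fin n => sig n (k.val + 1), isLiftable n hn⟩

lemma rho_simple {n : ℕ} (hn : 3 ≤ n) (cs : CoxeterSystem (CoxeterMatrix.Bₙ n) W)
    (k : Fin n) : rho hn cs (cs.simple k) = sig n (k.val + 1) :=
  cs.lift_apply_simple (isLiftable n hn) k

lemma gd_rho {n : ℕ} (hn : 3 ≤ n) (cs : CoxeterSystem (CoxeterMatrix.Bₙ n) W) (w : W) :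
    Gd n (rho hn cs w) := by
  obtain ⟨ω, rfl⟩ := cs.wordProd_surjective w
  induction ω with
  | nil =>
    rw [CoxeterSystem.wordProd_nil, map_one]
    exact gd_one n
  | cons i ω ih =>
    rw [CoxeterSystem.wordProd_cons, map_mul, rho_simple hn cs i]
    exact gd_mul (gd_sig (by omega) (by omega)) ih

lemma NN_rho_wordProd_le {n : ℕ} (hn : 3 ≤ n) (cs : CoxeterSystem (CoxeterMatrix.Bₙ n) W) :
    ∀ ω : List (Fin n), NN n (rho hn cs (cs.wordProd ω)) ≤ ω.length := by
  intro ω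
  induction ω using List.reverseRecOn with
  | nil =>
    rw [CoxeterSystem.wordProd_nil, map_one, NN_one]
    exact Nat.zero_le _
  | append_singleton ω i ih =>
    rw [CoxeterSystem.wordProd_append, CoxeterSystem.wordProd_singleton, map_mul,
      rho_simple hn cs i, List.length_append]
    have hstep := NN_le_step (n := n) (i := i.val + 1) (rho hn cs (cs.wordProd ω))
      (gd_rho hn cs _) (by omega) (by omega)
    simp only [List.length_singleton]
    omega

lemma NN_le_length {n : ℕ} (hn : 3 ≤ n) (cs : CoxeterSystem (CoxeterMatrix.Bₙ n) W) (w : W) :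
    NN n (rho hn cs w) ≤ cs.length w := by
  obtain ⟨ω, hlen, hw⟩ := cs.exists_reduced_word w
  rw [hw]
  calc NN n (rho hn cs (cs.wordProd ω)) ≤ ω.length := NN_rho_wordProd_le hn cs ω
  _ = cs.length w := by rw [hw, hlen.eq]
  _ = cs.length (cs.wordProd ω) := by rw [hw]

lemma rho_sN {n : ℕ} (hn : 3 ≤ n) (cs : CoxeterSystem (CoxeterMatrix.Bₙ n) W)
    {i : ℕ} (h1 : 1 ≤ i) (h2 : i ≤ n) : rho hn cs (sN cs i) = sig n i := by
  unfold sN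
  rw [dif_pos ⟨h1, h2⟩, rho_simple hn cs]
  congr 1
  show i - 1 + 1 = i
  omega

lemma rho_intv {n : ℕ} (hn : 3 ≤ n) (cs : CoxeterSystem (CoxeterMatrix.Bₙ n) W)
    {c b : ℕ} (hc : 1 ≤ c) (hb : b ≤ n) : rho hn cs (intv cs c b) = PS n c b := by
  unfold intv PS
  rw [map_list_prod, List.map_map]
  congr 1
  apply List.map_congr_left
  intro i hi
  rw [List.mem_range'_1] at hi
  exact rho_sN hn cs (by omega) (by omega)

lemma length_sN {n : ℕ} (cs : CoxeterSystem (CoxeterMatrix.Bₙ n) W) (i : ℕ) :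
    cs.length (sN cs i) ≤ 1 := by
  unfold sN
  split_ifs with h
  · rw [cs.length_simple]
  · rw [cs.length_one]
    omega

lemma length_prod_sN {n : ℕ} (cs : CoxeterSystem (CoxeterMatrix.Bₙ n) W) (l : List ℕ) :
    cs.length ((l.map (sN cs)).prod) ≤ l.length := by
  induction l with
  | nil =>
    simp [cs.length_one]
  | cons head tail ih =>
    rw [List.map_cons, List.prod_cons, List.length_cons]
    have := cs.length_mul_le (sN cs head) ((tail.map (sN cs)).prod)
    have := length_sN cs head
    omega

lemma length_intv {n : ℕ} (cs : CoxeterSystem (CoxeterMatrix.Bₙ n) W) (c b : ℕ) :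
    cs.length (intv cs c b) ≤ b + 1 - c := by
  unfold intv
  have := length_prod_sN cs (List.range' c (b+1-c))
  rwa [List.length_range'] at this

lemma list_sum_Icc (k : ℕ) (f : ℕ → ℕ) :
    ((List.range' 1 k).map f).sum = ∑ j ∈ Finset.Icc 1 k, f j := by
  induction k with
  | zero => simp
  | succ k ih =>
    rw [List.range'_1_concat, List.map_append, List.sum_append,
      Finset.sum_Icc_succ_top (by omega), ih]
    simp [add_comm 1 k]

end PartD


/-- The signed permutation of the product of the first `j` full runs. -/
noncomputable def Gpre {n : ℕ} (hn : 3 ≤ n) (cs : CoxeterSystem (CoxeterMatrix.Bₙ n) W)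
    (a : ℕ → ℕ) (j : ℕ) : Equiv.Perm ℤ :=
  rho hn cs (((List.range' 1 j).map fun i => intv cs (a i) n).prod)

lemma Gpre_zero {n : ℕ} (hn : 3 ≤ n) (cs : CoxeterSystem (CoxeterMatrix.Bₙ n) W)
    (a : ℕ → ℕ) : Gpre hn cs a 0 = 1 := by
  unfold Gpre
  simp

lemma Gpre_succ {n : ℕ} (hn : 3 ≤ n) (cs : CoxeterSystem (CoxeterMatrix.Bₙ n) W)
    (a : ℕ → ℕ) (j : ℕ) (h1 : 1 ≤ a (j+1)) :
    Gpre hn cs a (j+1) = Gpre hn cs a j * PS n (a (j+1)) n := by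
  unfold Gpre
  rw [List.range'_1_concat, List.map_append, List.prod_append, map_mul]
  congr 1
  rw [show 1 + j = j + 1 from by omega]
  simp only [List.map_cons, List.map_nil, List.prod_cons, List.prod_nil, mul_one]
  exact rho_intv hn cs h1 le_rfl

lemma gd_Gpre {n : ℕ} (hn : 3 ≤ n) (cs : CoxeterSystem (CoxeterMatrix.Bₙ n) W)
    (a : ℕ → ℕ) (j : ℕ) : Gd n (Gpre hn cs a j) :=
  gd_rho hn cs _

lemma length_prefix_le {n : ℕ} (cs : CoxeterSystem (CoxeterMatrix.Bₙ n) W)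
    (a : ℕ → ℕ) (j : ℕ) :
    cs.length (((List.range' 1 j).map fun i => intv cs (a i) n).prod)
      ≤ ∑ i ∈ Finset.Icc 1 j, (n + 1 - a i) := by
  induction j with
  | zero => simp [cs.length_one]
  | succ j ih =>
    rw [List.range'_1_concat, List.map_append, List.prod_append,
      Finset.sum_Icc_succ_top (by omega)]
    have h1 := cs.length_mul_le (((List.range' 1 j).map fun i => intv cs (a i) n).prod)
      (([1+j].map fun i => intv cs (a i) n).prod)
    have h2 := length_intv cs (a (1+j)) n
    simp only [List.map_cons, List.map_nil, List.prod_cons, List.prod_nil, mul_one] at h1 ⊢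
    rw [show 1 + j = j + 1 from by omega] at h1 h2 ⊢
    omega


/-- Let `n ≥ a_1 > a_2 > ⋯ > a_r ≥ 1` be a decreasing sequence of integers and set
`w = (∏_{j=a_1}^{n} s_j)(∏_{j=a_2}^{n} s_j) ⋯ (∏_{j=a_{r-1}}^{n} s_j)(∏_{j=a_r}^{n-1} s_j)`
in the Coxeter group `W` of type `Cₙ` (`n ≥ 3`).  Then this expression is reduced, i.e.
`ℓ(w) = Σ_{j=1}^{r-1} (n + 1 - a_j) + (n - a_r)`. -/
theorem reduced_expression_of_descending_runs (n : ℕ) (hn : 3 ≤ n)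
    (cs : CoxeterSystem (CoxeterMatrix.Bₙ n) W)
    (r : ℕ) (hr : 1 ≤ r) (a : ℕ → ℕ) (ha1 : a 1 ≤ n) (har : 1 ≤ a r)
    (hdec : ∀ j, 1 ≤ j → j < r → a (j + 1) < a j) :
    cs.length
        (((List.range' 1 (r - 1)).map fun j => intv cs (a j) n).prod *
          intv cs (a r) (n - 1)) =
      (∑ j ∈ Finset.Icc 1 (r - 1), (n + 1 - a j)) + (n - a r) := by
  have amono : ∀ d p : ℕ, 1 ≤ p → p + d ≤ r → a (p + d) + d ≤ a p := by
    intro d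
    induction d with
    | zero => intro p hp hpr; simp
    | succ d ih =>
      intro p hp hpr
      have h1 := ih p hp (by omega)
      have h2 := hdec (p + d) (by omega) (by omega)
      have h3 : p + (d+1) = (p+d) + 1 := by omega
      rw [h3]
      omega
  have habd : ∀ j, 1 ≤ j → j ≤ r → 1 ≤ a j ∧ a j ≤ n := by
    intro j h1 h2
    have hb1 := amono (r - j) j h1 (by omega)
    have hb2 := amono (j - 1) 1 (by omega) (by omega)
    rw [show j + (r - j) = r from by omega] at hb1
    rw [show 1 + (j - 1) = j from by omega] at hb2
    omega
  have main : ∀ j, j ≤ r - 1 →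
      NN n (Gpre hn cs a j) = ∑ i ∈ Finset.Icc 1 j, (n + 1 - a i)
      ∧ (∀ v : ℤ, ((a (j+1)):ℤ) < v → v ≤ (n:ℤ) →
           (((a (j+1)):ℤ) < Gpre hn cs a j v ∧ Gpre hn cs a j v ≤ (n:ℤ))
             ∨ (-(n:ℤ) ≤ Gpre hn cs a j v ∧ Gpre hn cs a j v ≤ -1))
      ∧ (∀ v : ℤ, 1 ≤ v → v ≤ ((a (j+1)):ℤ) → Gpre hn cs a j v = v) := by
    intro j
    induction j with
    | zero =>
      intro _
      rw [Gpre_zero hn cs a]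
      refine ⟨by rw [NN_one, Finset.Icc_eq_empty (by omega), Finset.sum_empty], ?_, ?_⟩
      · intro v hv1 hv2
        simp only [Equiv.Perm.one_apply]
        left
        exact ⟨hv1, hv2⟩
      · intro v hv1 hv2
        simp
    | succ j ih =>
      intro hj
      obtain ⟨ihN, ihH, ihF⟩ := ih (by omega)
      have hc1 : 1 ≤ a (j+1) := (habd (j+1) (by omega) (by omega)).1
      have hcn : a (j+1) ≤ n := (habd (j+1) (by omega) (by omega)).2
      have hsplit := Gpre_succ hn cs a j hc1
      have hg : Gd n (Gpre hn cs a j) := gd_Gpre hn cs a j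
      have hlt : a (j+1+1) < a (j+1) := hdec (j+1) (by omega) (by omega)
      obtain ⟨htr1, htr2⟩ := run_transfer n (a (j+1)) (a (j+1+1)) (Gpre hn cs a j)
        hg hc1 hcn ihH ihF hlt
      refine ⟨?_, ?_, ?_⟩
      · rw [hsplit, run_full n (a (j+1)) (Gpre hn cs a j) hg hc1 hcn ihH ihF, ihN,
          Finset.sum_Icc_succ_top (by omega)]
      · rw [hsplit]
        exact htr1
      · rw [hsplit]
        exact htr2
  obtain ⟨hN, hH, hF⟩ := main (r-1) le_rfl
  rw [show r - 1 + 1 = r from by omega] at hH hF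
  have hc1 : 1 ≤ a r := har
  have hcn : a r ≤ n := (habd r (by omega) le_rfl).2
  have hrhoE : rho hn cs (((List.range' 1 (r - 1)).map fun j => intv cs (a j) n).prod *
        intv cs (a r) (n - 1))
      = Gpre hn cs a (r-1) * PS n (a r) (n-1) := by
    rw [map_mul]
    congr 1
    exact rho_intv hn cs hc1 (by omega)
  have hNNE : NN n (rho hn cs (((List.range' 1 (r - 1)).map fun j => intv cs (a j) n).prod *
        intv cs (a r) (n - 1)))
      = (∑ j ∈ Finset.Icc 1 (r-1), (n + 1 - a j)) + (n - a r) := by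
    rw [hrhoE, run_NN n (a r) (Gpre hn cs a (r-1)) hc1 hcn hH hF (n-1) (by omega) le_rfl, hN]
    omega
  have hlow := NN_le_length hn cs (((List.range' 1 (r - 1)).map fun j => intv cs (a j) n).prod *
    intv cs (a r) (n - 1))
  have h1 := cs.length_mul_le (((List.range' 1 (r - 1)).map fun j => intv cs (a j) n).prod)
    (intv cs (a r) (n - 1))
  have h2 := length_prefix_le cs a (r-1)
  have h3 := length_intv cs (a r) (n-1)
  omega
end

section
/- Every Coxeter element c of the Coxeter group W of type Cₙ can be written as c = ∏_{j=1}^{k} [a_j, a_{j−1} − 1] for some integer k ≥ 1 and some decreasing sequence n ≥ a_1 > a_2 > ⋯ > a_k = 1, where a_0 := n + 1 (so the first factor is [a_1, n]), and where the product is taken in the order [a_1, a_0 − 1]·[a_2, a_1 − 1]⋯[a_k, a_{k−1} − 1]. -/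
/-!
Let `(W, S)` be the Coxeter system of type `Cₙ` (`n ≥ 3`), with simple reflections
`s_1, …, s_n` and `(s_i s_{i+1})³ = 1` for `1 ≤ i ≤ n-2`, `(s_{n-1} s_n)⁴ = 1`,
`(s_i s_j)² = 1` for `|i - j| ≥ 2`; its Coxeter matrix is `CoxeterMatrix.Bₙ n`.
For `i ≤ j`, `[i, j] := s_i s_{i+1} ⋯ s_j`.

STATEMENT: every Coxeter element `c` of `W` can be written as
`c = [a_1, a_0 - 1]·[a_2, a_1 - 1] ⋯ [a_k, a_{k-1} - 1]` for some `k ≥ 1` and a decreasing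
sequence `n ≥ a_1 > a_2 > ⋯ > a_k = 1`, where `a_0 := n + 1`.
-/

variable {W : Type*} [Group W]

private theorem BnM_eq_two {n : ℕ} (i j : Fin n)
    (h : (i : ℕ) + 2 ≤ (j : ℕ)) (hn : 3 ≤ n) : CoxeterMatrix.Bₙ n i j = 2 := by
  show (CoxeterMatrix.Bₙ n).M i j = 2
  simp only [CoxeterMatrix.Bₙ, CoxeterMatrix.B, Matrix.of_apply]
  rw [if_neg, if_neg, if_neg]
  · omega
  · omega
  · simp only [Fin.ext_iff]; omega

private theorem simple_comm {n : ℕ} (cs : CoxeterSystem (CoxeterMatrix.Bₙ n) W) (i j : Fin n)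
    (h : (i : ℕ) + 2 ≤ (j : ℕ)) (hn : 3 ≤ n) :
    Commute (cs.simple i) (cs.simple j) := by
  have h2 := cs.simple_mul_simple_pow i j
  rw [BnM_eq_two i j h hn, sq] at h2
  have h3 : cs.simple i * cs.simple j = (cs.simple i * cs.simple j)⁻¹ :=
    eq_inv_of_mul_eq_one_left h2
  rw [mul_inv_rev, cs.inv_simple, cs.inv_simple] at h3
  exact h3

private theorem range'_map_shift {α : Type*} (F : ℕ → α) (s m : ℕ) :
    (List.range' (s + 1) m).map F = (List.range' s m).map (fun j => F (j + 1)) := by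
  rw [List.range'_eq_map_range, List.range'_eq_map_range, List.map_map, List.map_map]
  apply List.map_congr_left
  intro x _
  show F (s + 1 + x) = F (s + x + 1)
  exact congrArg F (by omega)

private theorem range'_two_shift {α : Type*} (F : ℕ → α) (m : ℕ) :
    (List.range' 2 m).map F = (List.range' 1 m).map (fun j => F (j + 1)) :=
  range'_map_shift F 1 m

private theorem a_mono {a : ℕ → ℕ} {k : ℕ}
    (dec : ∀ j, 1 ≤ j → j < k → a (j + 1) < a j) :
    ∀ i j, 1 ≤ i → i ≤ j → j ≤ k → a j ≤ a i := by
  intro i j h1 hij hjk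
  induction j with
  | zero => omega
  | succ m ih =>
    rcases Nat.eq_or_lt_of_le hij with h | hlt
    · rw [← h]
    · have hd : a (m + 1) < a m := dec m (by omega) (by omega)
      have := ih (by omega) (by omega)
      omega

private theorem normal_form_aux (f : ℕ → W)
    (comm : ∀ i j : ℕ, i + 2 ≤ j → Commute (f i) (f j)) :
    ∀ n : ℕ, 1 ≤ n → ∀ L : List ℕ, L.Perm (List.range' 1 n) →
      ∃ (k : ℕ) (a : ℕ → ℕ), 1 ≤ k ∧ a 0 = n + 1 ∧ a k = 1 ∧ a 1 ≤ n ∧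
        (∀ j, 1 ≤ j → j < k → a (j + 1) < a j) ∧
        (L.map f).prod = ((List.range' 1 k).map fun j =>
          ((List.range' (a j) (a (j - 1) - 1 + 1 - a j)).map f).prod).prod := by
  intro n
  induction n with
  | zero => omega
  | succ n ih =>
    intro _ L hL
    by_cases hn1 : n = 0
    · -- base case: n + 1 = 1
      subst hn1
      have hL1 : L = [1] := List.perm_singleton.mp (by simpa using hL)
      subst hL1
      refine ⟨1, fun j => if j = 0 then 2 else 1, le_refl 1, by norm_num, by norm_num,
        by norm_num, by omega, ?_⟩
      norm_num [List.range'_one]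
    · -- inductive case: n ≥ 1
      have hn : 1 ≤ n := by omega
      have hmem : n + 1 ∈ L := hL.mem_iff.2 (by rw [List.mem_range'_1]; omega)
      obtain ⟨P, Q, rfl⟩ := List.append_of_mem hmem
      have hndL : (List.range' 1 (n + 1)).Nodup := List.nodup_range' (s := 1) (n := n + 1)
      have hcnt1 : (List.range' 1 (n + 1)).count (n + 1) = 1 :=
        List.count_eq_one_of_mem hndL (by rw [List.mem_range'_1]; omega)
      have hcntL := hL.count_eq (n + 1)
      rw [hcnt1, List.count_append, List.count_cons_self] at hcntL
      have hnotP : (n + 1) ∉ P := List.count_eq_zero.mp (by omega)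
      have hnotQ : (n + 1) ∉ Q := List.count_eq_zero.mp (by omega)
      -- P ++ Q is a permutation of range' 1 n
      have hPQ : (P ++ Q).Perm (List.range' 1 n) := by
        have h1 : (P ++ (n + 1) :: Q).Perm ((n + 1) :: (P ++ Q)) := List.perm_middle
        have h2 : List.range' 1 (n + 1) = List.range' 1 n ++ [1 + n] :=
          List.range'_1_concat (s := 1) (n := n)
        have h3 : (List.range' 1 n ++ [n + 1]).Perm ((n + 1) :: List.range' 1 n) :=
          List.perm_append_singleton _ _
        have h4 : ((n + 1) :: (P ++ Q)).Perm ((n + 1) :: List.range' 1 n) :=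
          h1.symm.trans (hL.trans (by rw [h2, Nat.add_comm 1 n]; exact h3))
        exact h4.cons_inv
      have hbound : ∀ x ∈ P ++ Q, 1 ≤ x ∧ x ≤ n := by
        intro x hx
        have := hPQ.mem_iff.mp hx
        rw [List.mem_range'_1] at this
        omega
      have hndPQ : (List.range' 1 n).Nodup := List.nodup_range' (s := 1) (n := n)
      have hcntn : (P ++ Q).count n = 1 := by
        rw [hPQ.count_eq]
        exact List.count_eq_one_of_mem hndPQ (by rw [List.mem_range'_1]; omega)
      rw [List.count_append] at hcntn
      have hnPQ : n ∈ P ++ Q := hPQ.mem_iff.2 (by rw [List.mem_range'_1]; omega)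
      obtain ⟨k, a, hk, ha0, hak, ha1, hdec, hprodIH⟩ := ih hn (P ++ Q) hPQ
      have hmono := a_mono hdec
      rcases List.mem_append.mp hnPQ with hnP | hnQ
      · -- n occurs before n + 1 : append f (n+1) at the end, extend first block
        have hQlt : ∀ x ∈ Q, x + 2 ≤ n + 1 := by
          intro x hx
          have hb := hbound x (List.mem_append_right P hx)
          have hxn : x ≠ n := by
            intro hxe
            subst hxe
            have h5 : 0 < P.count x := List.count_pos_iff.2 hnP
            have h6 : 0 < Q.count x := List.count_pos_iff.2 hx
            omega
          omega
        have hcommQ : Commute (f (n + 1)) ((Q.map f).prod) :=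
          Commute.list_prod_right _ _ (by
            intro x hx
            obtain ⟨p, hp, rfl⟩ := List.mem_map.mp hx
            exact (comm p (n + 1) (hQlt p hp)).symm)
        have hprod : (((P ++ (n + 1) :: Q)).map f).prod = ((P ++ Q).map f).prod * f (n + 1) := by
          simp only [List.map_append, List.map_cons, List.prod_append, List.prod_cons]
          rw [hcommQ.eq, ← mul_assoc]
        obtain ⟨k', rfl⟩ : ∃ k', k = k' + 1 := ⟨k - 1, by omega⟩
        refine ⟨k' + 1, fun j => if j = 0 then n + 2 else a j, hk, by norm_num, ?_, ?_, ?_, ?_⟩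
        · simp only [if_neg (by omega : ¬ k' + 1 = 0)]; exact hak
        · simp only [if_neg (by omega : ¬ (1 : ℕ) = 0)]; omega
        · intro j hj1 hjk
          simp only [if_neg (by omega : ¬ j + 1 = 0), if_neg (by omega : ¬ j = 0)]
          exact hdec j hj1 hjk
        · rw [hprod, hprodIH]
          have hsplit : List.range' 1 (k' + 1) = 1 :: List.range' 2 k' := List.range'_succ (s := 1) (n := k') (step := 1)
          rw [hsplit, List.map_cons, List.map_cons, List.prod_cons, List.prod_cons]
          -- tail blocks are equal
          have htail : (List.range' 2 k').map (fun j =>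
                ((List.range' ((if j = 0 then n + 2 else a j))
                  ((if j - 1 = 0 then n + 2 else a (j - 1)) - 1 + 1 -
                    (if j = 0 then n + 2 else a j))).map f).prod) =
              (List.range' 2 k').map (fun j =>
                ((List.range' (a j) (a (j - 1) - 1 + 1 - a j)).map f).prod) := by
            apply List.map_congr_left
            intro j hj
            rw [List.mem_range'_1] at hj
            rw [if_neg (by omega : ¬ j = 0), if_neg (by omega : ¬ j - 1 = 0)]
          rw [htail]
          -- f (n+1) commutes with the tail product
          have hcommT : Commute (f (n + 1))
              (((List.range' 2 k').map (fun j =>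
                ((List.range' (a j) (a (j - 1) - 1 + 1 - a j)).map f).prod)).prod) := by
            apply Commute.list_prod_right
            intro x hx
            obtain ⟨j, hj, rfl⟩ := List.mem_map.mp hx
            rw [List.mem_range'_1] at hj
            apply (Commute.list_prod_right _ _ ?_)
            intro y hy
            obtain ⟨z, hz, rfl⟩ := List.mem_map.mp hy
            rw [List.mem_range'_1] at hz
            have h5 : a j ≤ a 1 := hmono 1 j (by omega) (by omega) (by omega)
            have h6 : a (j - 1) ≤ a 1 := hmono 1 (j - 1) (by omega) (by omega) (by omega)
            have h7 : a (k' + 1) ≤ a (j - 1) := hmono (j - 1) (k' + 1) (by omega) (by omega) (by omega)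
            exact (comm z (n + 1) (by omega)).symm
          -- first block: extend by f (n + 1)
          have hfirst :
              ((List.range' (if (1:ℕ) = 0 then n + 2 else a 1)
                ((if (1:ℕ) - 1 = 0 then n + 2 else a (1 - 1)) - 1 + 1 -
                  (if (1:ℕ) = 0 then n + 2 else a 1))).map f).prod =
              ((List.range' (a 1) (a 0 - 1 + 1 - a 1)).map f).prod * f (n + 1) := by
            rw [if_neg (by omega : ¬ (1:ℕ) = 0), if_pos (by omega : (1:ℕ) - 1 = 0)]
            have h8 : a (k' + 1) ≤ a 1 := hmono 1 (k' + 1) (by omega) (by omega) (by omega)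
            have h9 : n + 2 - 1 + 1 - a 1 = (a 0 - 1 + 1 - a 1) + 1 := by omega
            rw [h9, List.range'_1_concat, List.map_append, List.prod_append]
            have h10 : a 1 + (a 0 - 1 + 1 - a 1) = n + 1 := by omega
            rw [h10]
            simp
          rw [hfirst, mul_assoc, ← hcommT.eq, ← mul_assoc]
      · -- n occurs after n + 1 : f (n+1) moves to the front, new singleton block
        have hPlt : ∀ x ∈ P, x + 2 ≤ n + 1 := by
          intro x hx
          have hb := hbound x (List.mem_append_left Q hx)
          have hxn : x ≠ n := by
            intro hxe
            subst hxe
            have h5 : 0 < P.count x := List.count_pos_iff.2 hx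
            have h6 : 0 < Q.count x := List.count_pos_iff.2 hnQ
            omega
          omega
        have hcommP : Commute (f (n + 1)) ((P.map f).prod) :=
          Commute.list_prod_right _ _ (by
            intro x hx
            obtain ⟨p, hp, rfl⟩ := List.mem_map.mp hx
            exact (comm p (n + 1) (hPlt p hp)).symm)
        have hprod : (((P ++ (n + 1) :: Q)).map f).prod = f (n + 1) * ((P ++ Q).map f).prod := by
          simp only [List.map_append, List.map_cons, List.prod_append, List.prod_cons]
          rw [← mul_assoc, ← hcommP.eq, mul_assoc]
        refine ⟨k + 1, fun j => if j = 0 then n + 2 else a (j - 1), by omega, by norm_num,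
          ?_, ?_, ?_, ?_⟩
        · simp only [if_neg (by omega : ¬ k + 1 = 0), Nat.add_sub_cancel]; exact hak
        · simp only [if_neg (by omega : ¬ (1:ℕ) = 0)]; simpa using ha0.le
        · intro j hj1 hjk
          simp only [if_neg (by omega : ¬ j + 1 = 0), if_neg (by omega : ¬ j = 0),
            Nat.add_sub_cancel]
          rcases Nat.eq_or_lt_of_le hj1 with h | hlt
          · rw [← h]; show a 1 < a 0; omega
          · have := hdec (j - 1) (by omega) (by omega)
            have hje : j - 1 + 1 = j := by omega
            rw [hje] at this
            exact this
        · rw [hprod, hprodIH]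
          have hsplit : List.range' 1 (k + 1) = 1 :: List.range' 2 k := List.range'_succ (s := 1) (n := k) (step := 1)
          rw [hsplit, List.map_cons, List.prod_cons]
          congr 1
          · -- first block is [f (n+1)]
            beta_reduce
            rw [if_neg (by omega : ¬ (1:ℕ) = 0), if_pos (by norm_num : (1:ℕ) - 1 = 0)]
            have h9 : (1 : ℕ) - 1 = 0 := rfl
            rw [h9, ha0]
            have h10 : n + 2 - 1 + 1 - (n + 1) = 1 := by omega
            rw [h10, List.range'_one]
            simp
          · rw [range'_two_shift]
            refine congrArg List.prod (List.map_congr_left ?_)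
            intro j hj
            rw [List.mem_range'_1] at hj
            beta_reduce
            rw [if_neg (by omega : ¬ j + 1 = 0), if_neg (by omega : ¬ j + 1 - 1 = 0)]
            have h12 : j + 1 - 1 = j := by omega
            rw [h12]


/-- Every Coxeter element `c` of the Coxeter group `W` of type `Cₙ` (`n ≥ 3`) can be
written as `c = ∏_{j=1}^{k} [a_j, a_{j-1} - 1]` (factors in increasing `j` from left to
right) for some integer `k ≥ 1` and a decreasing sequence `n ≥ a_1 > a_2 > ⋯ > a_k = 1`,
where `a_0 := n + 1` (so the first factor is `[a_1, n]`). -/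
theorem coxeter_element_normal_form (n : ℕ) (hn : 3 ≤ n)
    (cs : CoxeterSystem (CoxeterMatrix.Bₙ n) W) (c : W) (hc : IsCoxeterElement cs c) :
    ∃ (k : ℕ) (a : ℕ → ℕ), 1 ≤ k ∧ a 0 = n + 1 ∧ a k = 1 ∧ a 1 ≤ n ∧
      (∀ j, 1 ≤ j → j < k → a (j + 1) < a j) ∧
      c = ((List.range' 1 k).map fun j => intv cs (a j) (a (j - 1) - 1)).prod := by
  obtain ⟨τ, rfl⟩ := hc
  set L : List ℕ := List.ofFn (fun k : Fin n => (τ k : ℕ) + 1) with hLdef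
  have hcomm : ∀ i j : ℕ, i + 2 ≤ j → Commute (sN cs i) (sN cs j) := by
    intro i j hij
    unfold sN
    by_cases hi : 1 ≤ i ∧ i ≤ n
    · by_cases hj : 1 ≤ j ∧ j ≤ n
      · rw [dif_pos hi, dif_pos hj]
        exact simple_comm cs _ _ (by show i - 1 + 2 ≤ j - 1; omega) hn
      · rw [dif_neg hj]; exact Commute.one_right _
    · rw [dif_neg hi]; exact Commute.one_left _
  have hperm : L.Perm (List.range' 1 n) := by
    have h1 : L = List.ofFn ((fun k : Fin n => (k : ℕ) + 1) ∘ τ) := rfl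
    have h2 : (List.ofFn (fun k : Fin n => (k : ℕ) + 1)) = List.range' 1 n := by
      rw [List.ofFn_eq_map, List.range'_eq_map_range, ← (List.ext_getElem (by simp) (by simp) : (List.finRange n).map Fin.val = List.range n), List.map_map]
      apply List.map_congr_left
      intro x _
      show (x : ℕ) + 1 = 1 + (x : ℕ)
      omega
    rw [h1, ← h2]
    exact τ.ofFn_comp_perm _
  obtain ⟨k, a, hk, ha0, hak, ha1, hdec, hprod⟩ :=
    normal_form_aux (sN cs) hcomm n (by omega) L hperm
  refine ⟨k, a, hk, ha0, hak, ha1, hdec, ?_⟩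
  have hc2 : cs.wordProd (List.ofFn fun k => τ k) = (L.map (sN cs)).prod := by
    show ((List.ofFn fun k => τ k).map cs.simple).prod = _
    rw [hLdef, List.map_ofFn, List.map_ofFn]
    refine congrArg List.prod (congrArg List.ofFn (funext fun x => ?_))
    show cs.simple (τ x) = sN cs ((τ x : ℕ) + 1)
    unfold sN
    rw [dif_pos ⟨Nat.le_add_left 1 _, by have := (τ x).isLt; omega⟩]
    congr 1
  rw [hc2, hprod]
  rfl
end

section
/- Let c = s_1 · s_2 ⋯ s_n be the Coxeter element of the Weyl group of type Cₙ acting on ℝⁿ (product with the rightmost factor applied first). Then for every 1 ≤ r ≤ n and every j with n + 1 − r ≤ j ≤ n, the vector cʳ(α_j) is a negative root. -/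
/-!
Type `Cₙ` Weyl group in its reflection representation on `ℝⁿ` (simple reflections `s_1, …, s_n`,
1-indexed: `s_i` swaps coordinates `i`, `i+1` for `i < n` and `s_n` negates the last coordinate).
Simple roots: `α_i = e_i - e_{i+1}` (`1 ≤ i ≤ n-1`), `α_n = 2eₙ`.  Positive roots:
`e_i ± e_j` (`i < j`) and `2e_i`; a root is negative if its negative is positive.

STATEMENT: for `c = s_1 s_2 ⋯ s_n` (rightmost applied first), every `1 ≤ r ≤ n` and every
`n + 1 - r ≤ j ≤ n`, the vector `cʳ(α_j)` is a negative root.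
-/

noncomputable section

/-- The standard basis vector `e_i` of `ℝⁿ` (`i : Fin n`, 0-indexed). -/
def eVec (n : ℕ) (i : Fin n) : Fin n → ℝ := Pi.single i 1

/-- The positive roots of type `Cₙ`: `e_i - e_j`, `e_i + e_j` (`i < j`) and `2e_i`. -/
def IsPosRoot (n : ℕ) (v : Fin n → ℝ) : Prop :=
  (∃ i j : Fin n, i < j ∧ (v = eVec n i - eVec n j ∨ v = eVec n i + eVec n j)) ∨
    ∃ i : Fin n, v = (2 : ℝ) • eVec n i

/-- A vector is a negative root iff its negative is a positive root. -/
def IsNegRoot (n : ℕ) (v : Fin n → ℝ) : Prop := IsPosRoot n (-v)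

/-- The simple root `α_j` (1-indexed, `1 ≤ j ≤ n`): `α_j = e_j - e_{j+1}` for `j < n`
and `α_n = 2eₙ`; junk value `0` out of range. -/
def alphaC (n : ℕ) (j : ℕ) : Fin n → ℝ :=
  if h : 1 ≤ j ∧ j < n then eVec n ⟨j - 1, by omega⟩ - eVec n ⟨j, h.2⟩
  else if h2 : j = n ∧ 0 < n then (2 : ℝ) • eVec n ⟨n - 1, by omega⟩
  else 0

lemma eVec_congr {n : ℕ} {a b : Fin n} (h : a.val = b.val) : eVec n a = eVec n b :=
  congrArg (eVec n) (Fin.ext h)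
lemma sC_swap_eVec (n i : ℕ) (h1 : 1 ≤ i) (h2 : i < n) (k : Fin n) :
    sC n i (eVec n k) = eVec n (Equiv.swap ⟨i - 1, by omega⟩ ⟨i, h2⟩ k) := by
  funext j
  simp only [sC, dif_pos (⟨h1, h2⟩ : 1 ≤ i ∧ i < n), LinearEquiv.funCongrLeft_apply, eVec]
  simp [Pi.single_apply, Equiv.apply_eq_iff_eq_symm_apply]
lemma sC_last_eVec (n : ℕ) (hn : 0 < n) (k : Fin n) :
    sC n n (eVec n k) = if k.val = n - 1 then -(eVec n k) else eVec n k := by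
  have hd : ¬ (1 ≤ n ∧ n < n) := by omega
  funext j
  simp only [sC, dif_neg hd, dif_pos (⟨rfl, hn⟩ : n = n ∧ 0 < n),
    LinearEquiv.ofLinear_apply, negLin, LinearMap.pi_apply, eVec]
  by_cases hk : k.val = n - 1 <;> by_cases hj : j.val = n - 1 <;>
    simp [hk, hj, hn, Pi.single_apply, Fin.ext_iff, LinearEquiv.ofLinear_apply, LinearMap.pi_apply] <;> omega

lemma leMulApply {M : Type*} [AddCommMonoid M] [Module ℝ M] (f g : M ≃ₗ[ℝ] M) (x : M) :
    (f * g) x = f (g x) := rfl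

lemma leOneApply {M : Type*} [AddCommMonoid M] [Module ℝ M] (x : M) :
    (1 : M ≃ₗ[ℝ] M) x = x := rfl

lemma Qprod_eVec (n : ℕ) : ∀ m (hm : m < n) (k : Fin n),
    ((List.range' 1 m).map (sC n)).prod (eVec n k) =
      eVec n ⟨if k.val < m then k.val + 1 else if k.val = m then 0 else k.val,
        by have := k.isLt; split_ifs <;> omega⟩ := by
  intro m
  induction m with
  | zero =>
    intro _ k
    simp only [List.range', List.map_nil, List.prod_nil, leOneApply]
    exact eVec_congr (by simp only [Fin.val_mk]; split_ifs <;> omega)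
  | succ m ih =>
    intro hm k
    rw [List.range'_concat, List.map_append, List.prod_append, List.map_singleton,
      List.prod_singleton, leMulApply]
    have h1m : 1 + 1 * m = m + 1 := by ring
    rw [h1m, sC_swap_eVec n (m + 1) (by omega) hm k]
    have hs : ((Equiv.swap (⟨m + 1 - 1, by omega⟩ : Fin n) ⟨m + 1, hm⟩) k).val =
        if k.val = m then m + 1 else if k.val = m + 1 then m else k.val := by
      simp only [Equiv.swap_apply_def, Fin.ext_iff]
      split_ifs <;> simp_all <;> omega
    rw [ih (by omega)]
    refine eVec_congr ?_
    simp only [hs]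
    split_ifs <;> omega

lemma c_eVec (n : ℕ) (hn : 1 ≤ n) (k : Fin n) :
    ((List.range' 1 n).map (sC n)).prod (eVec n k) =
      if h : k.val + 1 < n then eVec n ⟨k.val + 1, h⟩ else -(eVec n ⟨0, by omega⟩) := by
  obtain ⟨m, rfl⟩ : ∃ m, n = m + 1 := ⟨n - 1, by omega⟩
  rw [List.range'_concat, List.map_append, List.prod_append, List.map_singleton,
    List.prod_singleton, leMulApply]
  have h1m : 1 + 1 * m = m + 1 := by ring
  rw [h1m, sC_last_eVec (m + 1) (by omega) k]
  by_cases hk : k.val = m + 1 - 1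
  · rw [if_pos hk, map_neg, Qprod_eVec (m + 1) m (by omega) k]
    simp only [dif_neg (show ¬ (k.val + 1 < m + 1) by omega)]
    refine congrArg Neg.neg (eVec_congr ?_)
    simp only [Fin.val_mk]
    split_ifs <;> omega
  · rw [if_neg hk, Qprod_eVec (m + 1) m (by omega) k]
    simp only [dif_pos (show k.val + 1 < m + 1 by omega)]
    refine eVec_congr ?_
    simp only [Fin.val_mk]
    split_ifs <;> omega

lemma cpow_eVec (n : ℕ) (hn : 1 ≤ n) : ∀ r (hr : r ≤ n) (k : Fin n),
    (((List.range' 1 n).map (sC n)).prod ^ r) (eVec n k) =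
      if h : k.val + r < n then eVec n ⟨k.val + r, h⟩
      else -(eVec n ⟨k.val + r - n, by have := k.isLt; omega⟩) := by
  intro r
  induction r with
  | zero =>
    intro _ k
    rw [pow_zero, leOneApply, dif_pos (by have := k.isLt; omega : k.val + 0 < n)]
    exact eVec_congr (by simp)
  | succ r ih =>
    intro hr k
    rw [pow_succ, leMulApply, c_eVec n hn k]
    by_cases h1 : k.val + 1 < n
    · rw [dif_pos h1, ih (by omega)]
      by_cases h2 : k.val + (r + 1) < n
      · rw [dif_pos (by simp only [Fin.val_mk]; omega : (⟨k.val + 1, h1⟩ : Fin n).val + r < n),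
          dif_pos h2]
        exact eVec_congr (by simp only [Fin.val_mk]; omega)
      · rw [dif_neg (by simp only [Fin.val_mk]; omega : ¬ (⟨k.val + 1, h1⟩ : Fin n).val + r < n),
          dif_neg h2]
        exact congrArg Neg.neg (eVec_congr (by simp only [Fin.val_mk]; omega))
    · rw [dif_neg h1, map_neg, ih (by omega)]
      have hk : k.val = n - 1 := by have := k.isLt; omega
      rw [dif_pos (by simp only [Fin.val_mk]; omega : (⟨0, by omega⟩ : Fin n).val + r < n),
        dif_neg (by omega : ¬ k.val + (r + 1) < n)]
      exact congrArg Neg.neg (eVec_congr (by simp only [Fin.val_mk]; omega))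


/-- Let `c = s_1 s_2 ⋯ s_n` (the rightmost factor applied first) be the Coxeter element of
the Weyl group of type `Cₙ` (`n ≥ 3`) acting on `ℝⁿ`.  Then for every `1 ≤ r ≤ n` and every
`j` with `n + 1 - r ≤ j ≤ n`, the vector `cʳ(α_j)` is a negative root. -/
theorem coxeter_pow_simple_root_neg (n : ℕ) (hn : 3 ≤ n) (r j : ℕ)
    (hr1 : 1 ≤ r) (hrn : r ≤ n) (hj1 : n + 1 - r ≤ j) (hjn : j ≤ n) :
    IsNegRoot n
      ((((List.range' 1 n).map (sC n)).prod ^ r) (alphaC n j)) := by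
  have hj0 : 1 ≤ j := by omega
  by_cases hjlt : j < n
  · -- α_j = e_{j-1} - e_j
    rw [alphaC, dif_pos ⟨hj0, hjlt⟩, map_sub,
      cpow_eVec n (by omega) r hrn ⟨j - 1, by omega⟩,
      cpow_eVec n (by omega) r hrn ⟨j, hjlt⟩,
      dif_neg (by simp only [Fin.val_mk]; omega : ¬ (⟨j - 1, by omega⟩ : Fin n).val + r < n),
      dif_neg (by simp only [Fin.val_mk]; omega : ¬ (⟨j, hjlt⟩ : Fin n).val + r < n)]
    refine Or.inl ⟨⟨(⟨j - 1, by omega⟩ : Fin n).val + r - n, by simp only [Fin.val_mk]; omega⟩,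
      ⟨(⟨j, hjlt⟩ : Fin n).val + r - n, by simp only [Fin.val_mk]; omega⟩,
      by simp only [Fin.mk_lt_mk, Fin.val_mk]; omega, Or.inl (by abel)⟩
  · -- j = n, α_n = 2 e_{n-1}
    have hjn' : j = n := by omega
    rw [alphaC, dif_neg (by omega), dif_pos ⟨hjn', by omega⟩, map_smul,
      cpow_eVec n (by omega) r hrn ⟨n - 1, by omega⟩,
      dif_neg (by simp only [Fin.val_mk]; omega : ¬ (⟨n - 1, by omega⟩ : Fin n).val + r < n)]
    refine Or.inr ⟨⟨r - 1, by omega⟩, ?_⟩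
    rw [smul_neg, neg_neg]
    exact congrArg (fun x => (2:ℝ) • x) (eVec_congr (by simp only [Fin.val_mk]; omega))

end
end
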